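/- arXiv:2303.05765 — 5 statements merged into one kernel-verified Lean document; each statement's English description precedes it below -/
import Mathlib

section
/- Let 𝒱 be a variety of groups defined by a set of words V, and let H be a group with a subgroup A such that A ≤ V*(H) (A is marginal in H) and A ∩ T(H) = {1} (A is a VP subgroup). If G ≅ H/A, then the group V(H) ∩ A is a homomorphic image (i.e., isomorphic to a quotient) of 𝒱B̃₀(G). -/
/-! Common framework: varieties of groups, verbal and marginal subgroups,
word values, the `B̃₀`-invariant of a group with respect to a variety. -/

universe u v

open scoped commutatorElement

/-- The set `T(G)` of values in `G` of the words in `V`. -/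
def wordValues (V : Set (FreeGroup ℕ)) (G : Type*) [Group G] : Set G :=
  {g | ∃ v ∈ V, ∃ f : ℕ → G, FreeGroup.lift f v = g}

/-- The verbal subgroup `V(G)`, generated by all values in `G` of words of `V`. -/
def verbal (V : Set (FreeGroup ℕ)) (G : Type*) [Group G] : Subgroup G :=
  Subgroup.closure (wordValues V G)

/-- The verbal subgroup `V(B)` of a subgroup `B` of `G`, viewed as a subgroup of `G`:
it is generated by all values of words of `V` at tuples of elements of `B`. -/
def verbalOn (V : Set (FreeGroup ℕ)) {G : Type*} [Group G] (B : Subgroup G) : Subgroup G :=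
  Subgroup.closure {g | ∃ v ∈ V, ∃ f : ℕ → G, (∀ n, f n ∈ B) ∧ FreeGroup.lift f v = g}

/-- The marginal subgroup `V*(G)`: those `a` such that replacing any entry `gᵢ` of any tuple
by `gᵢ * a` does not change the value of any word of `V`. -/
def marginal (V : Set (FreeGroup ℕ)) (G : Type*) [Group G] : Subgroup G where
  carrier := {a | ∀ v ∈ V, ∀ f : ℕ → G, ∀ i : ℕ,
    FreeGroup.lift (Function.update f i (f i * a)) v = FreeGroup.lift f v}
  one_mem' := by
    intro v hv f i
    rw [mul_one, Function.update_eq_self]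
  mul_mem' := by
    intro a b ha hb v hv f i
    have h1 := hb v hv (Function.update f i (f i * a)) i
    rw [Function.update_self, Function.update_idem] at h1
    rw [← mul_assoc]
    exact h1.trans (ha v hv f i)
  inv_mem' := by
    intro a ha v hv f i
    have h1 := ha v hv (Function.update f i (f i * a⁻¹)) i
    rw [Function.update_self, Function.update_idem, inv_mul_cancel_right,
      Function.update_eq_self] at h1
    exact h1.symm

lemma FreeGroup.lift_conj {α : Type*} {G : Type*} [Group G] (f : α → G) (c : G)
    (w : FreeGroup α) :
    FreeGroup.lift (fun n => c * f n * c⁻¹) w = c * FreeGroup.lift f w * c⁻¹ := by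
  have h : (FreeGroup.lift (fun n => c * f n * c⁻¹) : FreeGroup α →* G)
      = ((MulAut.conj c).toMonoidHom.comp (FreeGroup.lift f)) := by
    apply FreeGroup.ext_hom
    intro a
    simp
  rw [h]
  simp

lemma Subgroup.closure_normal_of_conj {G : Type*} [Group G] {S : Set G}
    (hS : ∀ c : G, ∀ g ∈ S, c * g * c⁻¹ ∈ S) : (Subgroup.closure S).Normal := by
  constructor
  intro x hx c
  induction hx using Subgroup.closure_induction with
  | mem g hg => exact Subgroup.subset_closure (hS c g hg)
  | one => simpa using (Subgroup.closure S).one_mem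
  | mul a b _ _ pa pb =>
      have h : c * (a * b) * c⁻¹ = (c * a * c⁻¹) * (c * b * c⁻¹) := by group
      rw [h]; exact mul_mem pa pb
  | inv a _ pa =>
      have h : c * a⁻¹ * c⁻¹ = (c * a * c⁻¹)⁻¹ := by group
      rw [h]; exact inv_mem pa

lemma wordValues_conj_mem {V : Set (FreeGroup ℕ)} {G : Type*} [Group G]
    (c : G) {g : G} (hg : g ∈ wordValues V G) : c * g * c⁻¹ ∈ wordValues V G := by
  obtain ⟨v, hv, f, rfl⟩ := hg
  exact ⟨v, hv, fun n => c * f n * c⁻¹, FreeGroup.lift_conj f c v⟩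

/-- The canonical free presentation `1 → R → F → G → 1` of `G`, with
`F = FreeGroup G` the free group on the underlying set of `G`. -/
def presHom (G : Type*) [Group G] : FreeGroup G →* G := FreeGroup.lift id

/-- The relation subgroup `R` of the canonical free presentation of `G`. -/
def presKer (G : Type*) [Group G] : Subgroup (FreeGroup G) := (presHom G).ker

/-- The numerator `R ∩ V(F)` of the `B̃₀`-invariant. -/
def vB0Num (V : Set (FreeGroup ℕ)) (G : Type*) [Group G] : Subgroup (FreeGroup G) :=
  presKer G ⊓ verbal V (FreeGroup G)

/-- The denominator `⟨T(F) ∩ R⟩` of the `B̃₀`-invariant. -/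
def vB0Den (V : Set (FreeGroup ℕ)) (G : Type*) [Group G] : Subgroup (FreeGroup G) :=
  Subgroup.closure (wordValues V (FreeGroup G) ∩ (presKer G : Set (FreeGroup G)))

lemma vB0Den_normal (V : Set (FreeGroup ℕ)) (G : Type*) [Group G] : (vB0Den V G).Normal := by
  apply Subgroup.closure_normal_of_conj
  rintro c g ⟨hg1, hg2⟩
  exact ⟨wordValues_conj_mem c hg1, (presHom G).normal_ker.conj_mem g hg2 c⟩

instance vB0DenSubgroupOf_normal (V : Set (FreeGroup ℕ)) (G : Type*) [Group G] :
    ((vB0Den V G).subgroupOf (vB0Num V G)).Normal :=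
  (vB0Den_normal V G).subgroupOf _

/-- The `B̃₀`-invariant `𝒱B̃₀(G) = (R ∩ V(F)) / ⟨T(F) ∩ R⟩` of `G` with respect to the
variety defined by the set of words `V`, computed from the canonical free presentation. -/
def vB0 (V : Set (FreeGroup ℕ)) (G : Type*) [Group G] : Type _ :=
  ↥(vB0Num V G) ⧸ (vB0Den V G).subgroupOf (vB0Num V G)

instance (V : Set (FreeGroup ℕ)) (G : Type*) [Group G] : Group (vB0 V G) :=
  inferInstanceAs (Group (↥(vB0Num V G) ⧸ (vB0Den V G).subgroupOf (vB0Num V G)))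

/-- A variety defined by a set of words `V` is a Schur-Baer variety if, for every group `G`
whose marginal factor `G/V*(G)` is finite (of order `m = [G : V*(G)]`), the verbal subgroup
`V(G)` is finite of order dividing a power of `m`. -/
def IsSchurBaer (V : Set (FreeGroup ℕ)) : Prop :=
  ∀ (G : Type u) [Group G], (marginal V G).FiniteIndex →
    Finite (verbal V G) ∧ ∃ k : ℕ, Nat.card (verbal V G) ∣ (marginal V G).index ^ k

/-- Outer commutator words: `IsOCWord a b w` means that `w` is an outer commutator word
in the (distinct) variables `x_a, x_{a+1}, …, x_{b-1}` (so of weight `b - a`).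
`IsOCWord 0 r w` means `w = w(x₁,…,x_r)` is an outer commutator word of weight `r`. -/
inductive IsOCWord : ℕ → ℕ → FreeGroup ℕ → Prop
  | var (i : ℕ) : IsOCWord i (i + 1) (FreeGroup.of i)
  | comm {a b c : ℕ} {u v : FreeGroup ℕ} :
      IsOCWord a b u → IsOCWord b c v → IsOCWord a c ⁅u, v⁆

/-- Given an outer commutator word `w = w(x₁,…,x_r)` (in variables `x_0,…,x_{r-1}`),
the set of laws `{[w(x₁,…,x_r), x_{r+1}, x_{r+2}]}` defining the
center-by-center-by-`w` variety. -/
def ocVariety (w : FreeGroup ℕ) (r : ℕ) : Set (FreeGroup ℕ) :=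
  {⁅⁅w, FreeGroup.of r⁆, FreeGroup.of (r + 1)⁆}

/-- The lifting condition of a VP extension: any trivial word (a value of a word of `V`
which equals `1`) of elements of the quotient has a trivial lift. -/
def HasVPLifts (V : Set (FreeGroup ℕ)) {G Q : Type*} [Group G] [Group Q] (π : G →* Q) : Prop :=
  ∀ v ∈ V, ∀ q : ℕ → Q, FreeGroup.lift q v = 1 →
    ∃ g : ℕ → G, (∀ i, π (g i) = q i) ∧ FreeGroup.lift g v = 1

/-- `1 → L → G* → Q → 1` is a VP cover of `Q` (with respect to the variety defined by `V`):
a `𝒱`-stem marginal VP extension with `L ≅ 𝒱B̃₀(Q)`. Here `L` is realized as a subgroup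
of `G*` and `π : G* → Q` is the projection. -/
structure IsVPCover (V : Set (FreeGroup ℕ)) {Gs : Type*} {Q : Type*} [Group Gs] [Group Q]
    (L : Subgroup Gs) (π : Gs →* Q) : Prop where
  surj : Function.Surjective π
  ker_eq : π.ker = L
  marginal_le : L ≤ marginal V Gs
  stem : L ≤ verbal V Gs
  lifts : HasVPLifts V π
  iso : Nonempty (L ≃* vB0 V Q)

/-- The single commutator word `[x₁, x₂]` defining the variety of abelian groups. -/
def commutatorWord : Set (FreeGroup ℕ) := {⁅FreeGroup.of 0, FreeGroup.of 1⁆}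

/-- The Bogomolov multiplier `B̃₀(G) = (R ∩ [F,F]) / ⟨K(F) ∩ R⟩`: the `B̃₀`-invariant with
respect to the variety of abelian groups (then the verbal subgroup of the free group `F` is
its derived subgroup `[F,F]` and the set of word values is the set `K(F)` of commutators). -/
def B0tilde (G : Type*) [Group G] : Type _ := vB0 commutatorWord G

instance (G : Type*) [Group G] : Group (B0tilde G) := inferInstanceAs (Group (vB0 commutatorWord G))


lemma FreeGroup.lift_eq_of_eqOn {α : Type*} [DecidableEq α] {G : Type*} [Group G] {f g : α → G}
    {v : FreeGroup α} (h : ∀ p ∈ v.toWord, f p.1 = g p.1) :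
    FreeGroup.lift f v = FreeGroup.lift g v := by
  conv_lhs => rw [← FreeGroup.mk_toWord (x := v)]
  conv_rhs => rw [← FreeGroup.mk_toWord (x := v)]
  rw [FreeGroup.lift_mk, FreeGroup.lift_mk]
  congr 1
  exact List.map_congr_left fun p hp => by rw [h p hp]

lemma FreeGroup.lift_comp_hom {α : Type*} {G K : Type*} [Group G] [Group K] (θ : G →* K)
    (f : α → G) (v : FreeGroup α) :
    θ (FreeGroup.lift f v) = FreeGroup.lift (fun n => θ (f n)) v := by
  have : θ.comp (FreeGroup.lift f) = FreeGroup.lift (fun n => θ (f n)) := by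
    apply FreeGroup.ext_hom; intro a; simp
  rw [← this]; rfl

lemma marginal_aux (V : Set (FreeGroup ℕ)) {G : Type*} [Group G] {v : FreeGroup ℕ}
    (hv : v ∈ V) (f : ℕ → G) (s : Finset ℕ) :
    ∀ a : ℕ → G, (∀ n, a n ∈ marginal V G) → (∀ n ∉ s, a n = 1) →
      FreeGroup.lift (fun n => f n * a n) v = FreeGroup.lift f v := by
  classical
  induction s using Finset.induction_on with
  | empty =>
      intro a _ h0
      have : (fun n => f n * a n) = f := funext fun n => by
        rw [h0 n (by simp), mul_one]
      rw [this]
  | @insert i t hit ih =>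
      intro a hma h0
      set a' : ℕ → G := Function.update a i 1 with ha'
      have key : (fun n => f n * a n)
          = Function.update (fun n => f n * a' n) i ((fun n => f n * a' n) i * a i) := by
        funext n
        by_cases hn : n = i
        · subst hn; simp [a']
        · simp [Function.update_of_ne hn, a']
      rw [key, hma i v hv (fun n => f n * a' n) i]
      refine ih a' (fun n => ?_) (fun n hn => ?_)
      · by_cases hn : n = i
        · subst hn; simp [a', Subgroup.one_mem]
        · simpa [a', Function.update_of_ne hn] using hma n
      · by_cases hni : n = i
        · subst hni; simp [a']
        · have : n ∉ insert i t := by simp [hni, fun h => hn h]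
          rw [ha', Function.update_of_ne hni]
          exact h0 n this

lemma marginal_lift_eq (V : Set (FreeGroup ℕ)) {G : Type*} [Group G] {v : FreeGroup ℕ}
    (hv : v ∈ V) (f a : ℕ → G) (ha : ∀ n, a n ∈ marginal V G) :
    FreeGroup.lift (fun n => f n * a n) v = FreeGroup.lift f v := by
  classical
  set s : Finset ℕ := (v.toWord.map Prod.fst).toFinset with hs
  set a' : ℕ → G := fun n => if n ∈ s then a n else 1 with ha'
  have h1 : FreeGroup.lift (fun n => f n * a n) v
      = FreeGroup.lift (fun n => f n * a' n) v := by
    refine (FreeGroup.lift_eq_of_eqOn fun p hp => ?_).symm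
    have hps : p.1 ∈ s := by
      rw [hs]; exact List.mem_toFinset.2 (List.mem_map_of_mem hp)
    simp [ha', hps]
  rw [h1]
  refine marginal_aux V hv f s a' (fun n => ?_) (fun n hn => ?_)
  · by_cases h : n ∈ s <;> simp [ha', h, ha n, Subgroup.one_mem]
  · simp [ha', hn]

/-- Lemma 3.1. Let `𝒱` be a variety defined by a set of words `V`, and
`A` a marginal VP subgroup of `H` (`A ≤ V*(H)` and `A ∩ T(H) = 1`). If `G ≅ H/A`, then
`V(H) ∩ A` is a homomorphic image of `𝒱B̃₀(G)`. -/
theorem stmt0 (V : Set (FreeGroup ℕ)) {H : Type u} {G : Type v} [Group H] [Group G]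
    (A : Subgroup H) [A.Normal]
    (hmarg : A ≤ marginal V H)
    (hVP : ∀ x ∈ A, x ∈ wordValues V H → x = 1)
    (hiso : Nonempty (G ≃* H ⧸ A)) :
    ∃ φ : vB0 V G →* ↥(verbal V H ⊓ A), Function.Surjective φ := by
  classical
  obtain ⟨ι⟩ := hiso
  let θ : FreeGroup G →* H := FreeGroup.lift (fun g => (ι g).out)
  have hθof : ∀ g : G, (QuotientGroup.mk (θ (FreeGroup.of g)) : H ⧸ A) = ι g := by
    intro g
    simp only [θ, FreeGroup.lift_apply_of]
    exact Quotient.out_eq (ι g)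
  have hθmk : ∀ w : FreeGroup G, (QuotientGroup.mk (θ w) : H ⧸ A) = ι (presHom G w) := by
    intro w
    have : (QuotientGroup.mk' A).comp θ = ι.toMonoidHom.comp (presHom G) := by
      apply FreeGroup.ext_hom
      intro g
      simp only [MonoidHom.comp_apply, QuotientGroup.mk'_apply, MulEquiv.coe_toMonoidHom,
        presHom, FreeGroup.lift_apply_of, id]
      exact hθof g
    exact DFunLike.congr_fun this w
  have hθval : ∀ {w : FreeGroup G}, w ∈ wordValues V (FreeGroup G) → θ w ∈ wordValues V H := by
    rintro w ⟨v, hv, f, rfl⟩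
    exact ⟨v, hv, fun n => θ (f n), (FreeGroup.lift_comp_hom θ f v).symm⟩
  have hverb : ∀ {w : FreeGroup G}, w ∈ verbal V (FreeGroup G) → θ w ∈ verbal V H := by
    intro w hw
    induction hw using Subgroup.closure_induction with
    | mem g hg => exact Subgroup.subset_closure (hθval hg)
    | one => rw [map_one]; exact one_mem _
    | mul a b _ _ pa pb => rw [map_mul]; exact mul_mem pa pb
    | inv a _ pa => rw [map_inv]; exact inv_mem pa
  have hker : ∀ {w : FreeGroup G}, w ∈ presKer G → θ w ∈ A := by
    intro w hw
    have h1 : presHom G w = 1 := hw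
    have : (QuotientGroup.mk (θ w) : H ⧸ A) = 1 := by rw [hθmk, h1, map_one]
    exact (QuotientGroup.eq_one_iff _).1 this
  have hmem : ∀ w : ↥(vB0Num V G), θ w.1 ∈ verbal V H ⊓ A := by
    intro w
    obtain ⟨h1, h2⟩ := Subgroup.mem_inf.1 w.2
    exact Subgroup.mem_inf.2 ⟨hverb h2, hker h1⟩
  let φ₀ : ↥(vB0Num V G) →* ↥(verbal V H ⊓ A) :=
    (θ.comp (vB0Num V G).subtype).codRestrict _ hmem
  have hden : ∀ w ∈ vB0Den V G, θ w = 1 := by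
    intro w hw
    induction hw using Subgroup.closure_induction with
    | mem g hg => exact hVP _ (hker hg.2) (hθval hg.1)
    | one => rw [map_one]
    | mul a b _ _ pa pb => rw [map_mul, pa, pb, one_mul]
    | inv a _ pa => rw [map_inv, pa, inv_one]
  have hcond : ∀ w ∈ (vB0Den V G).subgroupOf (vB0Num V G), φ₀ w = 1 := by
    intro w hw
    exact Subtype.ext (hden w.1 (Subgroup.mem_subgroupOf.1 hw))
  have cover : ∀ x ∈ verbal V H, ∃ w ∈ verbal V (FreeGroup G), θ w = x := by
    intro x hx
    induction hx using Subgroup.closure_induction with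
    | mem x hx =>
        obtain ⟨v, hv, h, rfl⟩ := hx
        set f : ℕ → FreeGroup G := fun n => FreeGroup.of (ι.symm (QuotientGroup.mk (h n)))
          with hf
        refine ⟨FreeGroup.lift f v, Subgroup.subset_closure ⟨v, hv, f, rfl⟩, ?_⟩
        rw [FreeGroup.lift_comp_hom θ f v]
        set g : ℕ → H := fun n => θ (f n) with hg
        have hga : ∀ n, (g n)⁻¹ * h n ∈ A := by
          intro n
          refine (QuotientGroup.eq).1 ?_
          rw [hg, hf]
          simpa using (hθof (ι.symm (QuotientGroup.mk (h n)))).trans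
            (ι.apply_symm_apply _)
        have heq : (fun n => g n * ((g n)⁻¹ * h n)) = h := funext fun n => by group
        calc FreeGroup.lift g v
            = FreeGroup.lift (fun n => g n * ((g n)⁻¹ * h n)) v :=
              (marginal_lift_eq V hv g _ (fun n => hmarg (hga n))).symm
          _ = FreeGroup.lift h v := by rw [heq]
    | one => exact ⟨1, one_mem _, map_one θ⟩
    | mul a b _ _ pa pb =>
        obtain ⟨w1, hw1, e1⟩ := pa
        obtain ⟨w2, hw2, e2⟩ := pb
        exact ⟨w1 * w2, mul_mem hw1 hw2, by rw [map_mul, e1, e2]⟩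
    | inv a _ pa =>
        obtain ⟨w1, hw1, e1⟩ := pa
        exact ⟨w1⁻¹, inv_mem hw1, by rw [map_inv, e1]⟩
  refine ⟨QuotientGroup.lift _ φ₀ hcond, ?_⟩
  rintro ⟨x, hx⟩
  obtain ⟨hx1, hx2⟩ := Subgroup.mem_inf.1 hx
  obtain ⟨w, hw, hθw⟩ := cover x hx1
  have hwker : w ∈ presKer G := by
    have h1 : ι (presHom G w) = 1 := by
      rw [← hθmk, hθw]
      exact (QuotientGroup.eq_one_iff x).2 hx2
    have : presHom G w = 1 := by
      apply ι.injective
      rw [h1, map_one]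
    exact this
  refine ⟨QuotientGroup.mk ⟨w, Subgroup.mem_inf.2 ⟨hwker, hw⟩⟩, ?_⟩
  exact Subtype.ext hθw
end

section
/- Let w = w(x₁,…,x_r) be an outer commutator word and let 𝒱 be the variety of groups defined by the single word [w(x₁,…,x_r), x_{r+1}, x_{r+2}]. Let B be a subgroup of finite index n in a group E. If x ∈ V*(E) ∩ V(E), then for all y₁,…,y_r ∈ B one has [w(y₁,…,y_r), xⁿ] ∈ V(B). In particular, if L ⊆ V*(E) ∩ V(E), then [W(B), Lⁿ] ⊆ V(B), where W(B) is the verbal subgroup of B with respect to w and Lⁿ is the subgroup generated by n-th powers of elements of L. -/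
/-! Common framework: varieties of groups, verbal and marginal subgroups,
word values, the `B̃₀`-invariant of a group with respect to a variety. -/

universe u v

open scoped commutatorElement

section Stmt2Proof
open Subgroup Function

variable {G : Type u} [Group G]

private lemma ocw_le {a b : ℕ} {w : FreeGroup ℕ} (h : IsOCWord a b w) : a ≤ b := by
  induction h with
  | var i => exact Nat.le_succ i
  | comm _ _ ih1 ih2 => exact ih1.trans ih2

private lemma ocw_lift_congr {a b : ℕ} {w : FreeGroup ℕ} (h : IsOCWord a b w)
    {f g : ℕ → G} (hfg : ∀ i, a ≤ i → i < b → f i = g i) :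
    FreeGroup.lift f w = FreeGroup.lift g w := by
  induction h with
  | var i => simpa using hfg i le_rfl (Nat.lt_succ_self i)
  | @comm a' b' c' uu vv h1 h2 ih1 ih2 =>
    rw [map_commutatorElement, map_commutatorElement,
      ih1 (fun i h1' h2' => hfg i h1' (h2'.trans_le (ocw_le h2))),
      ih2 (fun i h1' h2' => hfg i ((ocw_le h1).trans h1') h2')]

private lemma ocw_lift_update {r : ℕ} {w : FreeGroup ℕ} (hw : IsOCWord 0 r w)
    (f : ℕ → G) {i : ℕ} (hi : r ≤ i) (z : G) :
    FreeGroup.lift (update f i z) w = FreeGroup.lift f w :=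
  ocw_lift_congr hw (fun j _ hj => update_of_ne (by omega) _ _)

private lemma lift_ocv {r : ℕ} {w : FreeGroup ℕ} (f : ℕ → G) :
    FreeGroup.lift f ⁅⁅w, FreeGroup.of r⁆, FreeGroup.of (r+1)⁆
      = ⁅⁅FreeGroup.lift f w, f r⁆, f (r+1)⁆ := by
  rw [map_commutatorElement, map_commutatorElement, FreeGroup.lift_apply_of, FreeGroup.lift_apply_of]

private lemma lift_ocv_pair {r : ℕ} {w : FreeGroup ℕ} (hw : IsOCWord 0 r w) (f : ℕ → G)
    (a b : G) :
    FreeGroup.lift (update (update f r a) (r+1) b) ⁅⁅w, FreeGroup.of r⁆, FreeGroup.of (r+1)⁆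
      = ⁅⁅FreeGroup.lift f w, a⁆, b⁆ := by
  have h1 : (update (update f r a) (r+1) b) r = a := by
    rw [update_of_ne (by omega : r ≠ r+1), update_self]
  have h2 : (update (update f r a) (r+1) b) (r+1) = b := update_self _ _ _
  rw [lift_ocv, h1, h2, ocw_lift_update hw _ (by omega : r ≤ r+1),
    ocw_lift_update hw _ le_rfl]


private lemma lift_ocv_pair2 {r : ℕ} {w : FreeGroup ℕ} (hw : IsOCWord 0 r w) (f : ℕ → G)
    (a b : G) :
    FreeGroup.lift (update (update f (r+1) b) r a) ⁅⁅w, FreeGroup.of r⁆, FreeGroup.of (r+1)⁆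
      = ⁅⁅FreeGroup.lift f w, a⁆, b⁆ := by
  have h1 : (update (update f (r+1) b) r a) r = a := update_self _ _ _
  have h2 : (update (update f (r+1) b) r a) (r+1) = b := by
    rw [update_of_ne (by omega : r+1 ≠ r), update_self]
  rw [lift_ocv, h1, h2, ocw_lift_update hw _ le_rfl, ocw_lift_update hw _ (by omega : r ≤ r+1)]

private lemma lift_mem_of_mem {B : Subgroup G} (f : ℕ → G) (hf : ∀ i, f i ∈ B)
    (v : FreeGroup ℕ) : FreeGroup.lift f v ∈ B := by
  have h : (FreeGroup.lift f : FreeGroup ℕ →* G)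
      = B.subtype.comp (FreeGroup.lift (fun i => (⟨f i, hf i⟩ : B))) := by
    apply FreeGroup.ext_hom
    intro a
    simp
  rw [h]
  exact SetLike.coe_mem _

private lemma marginal_normal (V : Set (FreeGroup ℕ)) : (marginal V G).Normal := by
  constructor
  intro a ha g
  intro v hv f i
  have key := ha v hv (fun j => g⁻¹ * f j * g) i
  have e2' : update f i (f i * (g * a * g⁻¹))
      = fun j => g * (update (fun j' => g⁻¹ * f j' * g) i ((g⁻¹ * f i * g) * a)) j * g⁻¹ := by
    funext j
    rcases eq_or_ne j i with rfl | hne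
    · rw [update_self, update_self]; group
    · rw [update_of_ne hne, update_of_ne hne]; group
  have e1 : FreeGroup.lift (fun j => g⁻¹ * f j * g) v = g⁻¹ * FreeGroup.lift f v * g := by
    have h := FreeGroup.lift_conj f g⁻¹ v
    simp only [inv_inv] at h
    exact h
  rw [e2', FreeGroup.lift_conj, key, e1]
  group

private lemma marg_1a {r : ℕ} {w : FreeGroup ℕ} (hw : IsOCWord 0 r w) {x : G}
    (hx : x ∈ marginal (ocVariety w r) G) (f : ℕ → G) (a : G) :
    ⁅⁅FreeGroup.lift f w, a⁆, x⁆ = 1 := by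
  have hx' : ∀ v ∈ ocVariety w r, ∀ g : ℕ → G, ∀ i,
      FreeGroup.lift (update g i (g i * x)) v = FreeGroup.lift g v := hx
  have h := hx' _ rfl (update (update f r a) (r+1) 1) (r+1)
  rw [update_self, one_mul, update_idem, lift_ocv_pair hw, lift_ocv_pair hw,
    commutatorElement_one_right] at h
  exact h

private lemma marg_1b {r : ℕ} {w : FreeGroup ℕ} (hw : IsOCWord 0 r w) {x : G}
    (hx : x ∈ marginal (ocVariety w r) G) (f : ℕ → G) (b : G) :
    ⁅⁅FreeGroup.lift f w, x⁆, b⁆ = 1 := by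
  have hx' : ∀ v ∈ ocVariety w r, ∀ g : ℕ → G, ∀ i,
      FreeGroup.lift (update g i (g i * x)) v = FreeGroup.lift g v := hx
  have h := hx' _ rfl (update (update f (r+1) b) r 1) r
  rw [update_self, one_mul, update_idem, lift_ocv_pair2 hw, lift_ocv_pair2 hw,
    commutatorElement_one_right, commutatorElement_one_left] at h
  exact h

private lemma marg_strip {r : ℕ} {w : FreeGroup ℕ} (hw : IsOCWord 0 r w) {μ μ' : G}
    (hμ : μ ∈ marginal (ocVariety w r) G) (hμ' : μ' ∈ marginal (ocVariety w r) G)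
    (f : ℕ → G) (b b' : G) :
    ⁅⁅FreeGroup.lift f w, b * μ⁆, b' * μ'⁆ = ⁅⁅FreeGroup.lift f w, b⁆, b'⁆ := by
  have hμ1 : ∀ v ∈ ocVariety w r, ∀ g : ℕ → G, ∀ i,
      FreeGroup.lift (update g i (g i * μ)) v = FreeGroup.lift g v := hμ
  have hμ2 : ∀ v ∈ ocVariety w r, ∀ g : ℕ → G, ∀ i,
      FreeGroup.lift (update g i (g i * μ')) v = FreeGroup.lift g v := hμ'
  have h1 := hμ1 _ rfl (update (update f (r+1) b') r b) r
  rw [update_self, update_idem, lift_ocv_pair2 hw, lift_ocv_pair2 hw] at h1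
  have h2 := hμ2 _ rfl (update (update f r (b * μ)) (r+1) b') (r+1)
  rw [update_self, update_idem, lift_ocv_pair hw, lift_ocv_pair hw] at h2
  exact h2.trans h1

private lemma vb_gen_mem {r : ℕ} {w : FreeGroup ℕ} (hw : IsOCWord 0 r w) {B : Subgroup G}
    (f : ℕ → G) (hf : ∀ i, f i ∈ B) {a b : G} (ha : a ∈ B) (hb : b ∈ B) :
    ⁅⁅FreeGroup.lift f w, a⁆, b⁆ ∈ verbalOn (ocVariety w r) B := by
  apply Subgroup.subset_closure
  refine ⟨_, rfl, update (update f r a) (r+1) b, ?_, lift_ocv_pair hw f a b⟩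
  intro i
  rcases eq_or_ne i (r+1) with rfl | h1
  · rwa [update_self]
  · rw [update_of_ne h1]
    rcases eq_or_ne i r with rfl | h2
    · rwa [update_self]
    · rw [update_of_ne h2]; exact hf i

private lemma marg_commute_vb {r : ℕ} {w : FreeGroup ℕ} (hw : IsOCWord 0 r w) {B : Subgroup G}
    {μ : G} (hμ : μ ∈ marginal (ocVariety w r) G) {z : G}
    (hz : z ∈ verbalOn (ocVariety w r) B) : Commute μ z := by
  have hle : verbalOn (ocVariety w r) B ≤ Subgroup.centralizer {μ} := by
    apply (Subgroup.closure_le _).mpr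
    rintro g ⟨v, hv, F, hFB, rfl⟩
    obtain rfl : v = ⁅⁅w, FreeGroup.of r⁆, FreeGroup.of (r+1)⁆ := hv
    rw [SetLike.mem_coe, Subgroup.mem_centralizer_iff]
    intro y hy
    rw [show y = μ from hy]
    have hQ : Commute μ ⁅FreeGroup.lift F w, F r⁆ :=
      (commutatorElement_eq_one_iff_commute.mp (marg_1a hw hμ F (F r))).symm
    have e2 : F (r+1) * FreeGroup.lift F w * (F (r+1))⁻¹
        = FreeGroup.lift (fun j => F (r+1) * F j * (F (r+1))⁻¹) w :=
      (FreeGroup.lift_conj F (F (r+1)) w).symm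
    have hQt : Commute μ (F (r+1) * ⁅FreeGroup.lift F w, F r⁆ * (F (r+1))⁻¹) := by
      have e : F (r+1) * ⁅FreeGroup.lift F w, F r⁆ * (F (r+1))⁻¹
          = ⁅F (r+1) * FreeGroup.lift F w * (F (r+1))⁻¹, F (r+1) * F r * (F (r+1))⁻¹⁆ := by
        simp only [commutatorElement_def]; group
      rw [e, e2]
      exact (commutatorElement_eq_one_iff_commute.mp (marg_1a hw hμ _ _)).symm
    have hcomb := hQ.mul_right hQt.inv_right
    have e3 : FreeGroup.lift F ⁅⁅w, FreeGroup.of r⁆, FreeGroup.of (r+1)⁆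
        = ⁅FreeGroup.lift F w, F r⁆
          * (F (r+1) * ⁅FreeGroup.lift F w, F r⁆ * (F (r+1))⁻¹)⁻¹ := by
      rw [lift_ocv]
      simp only [commutatorElement_def]
      group
    rw [e3]
    exact hcomb.eq
  have h := hle hz
  rw [Subgroup.mem_centralizer_iff] at h
  exact h μ rfl

private lemma b_conj_vb {r : ℕ} {w : FreeGroup ℕ} {B : Subgroup G} {b : G} (hb : b ∈ B)
    {z : G} (hz : z ∈ verbalOn (ocVariety w r) B) :
    b * z * b⁻¹ ∈ verbalOn (ocVariety w r) B := by
  induction hz using Subgroup.closure_induction with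
  | mem g hg =>
    obtain ⟨v, hv, F, hFB, rfl⟩ := hg
    apply Subgroup.subset_closure
    refine ⟨v, hv, fun j => b * F j * b⁻¹,
      fun j => B.mul_mem (B.mul_mem hb (hFB j)) (B.inv_mem hb), ?_⟩
    rw [FreeGroup.lift_conj]
  | one => simpa using (verbalOn (ocVariety w r) B).one_mem
  | mul a c _ _ pa pc =>
    have h : b * (a * c) * b⁻¹ = (b * a * b⁻¹) * (b * c * b⁻¹) := by group
    rw [h]; exact mul_mem pa pc
  | inv a _ pa =>
    have h : b * a⁻¹ * b⁻¹ = (b * a * b⁻¹)⁻¹ := by group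
    rw [h]; exact inv_mem pa

private lemma star_comm {r : ℕ} {w : FreeGroup ℕ} (hw : IsOCWord 0 r w) {μ : G}
    (hμ : μ ∈ marginal (ocVariety w r) G) (f : ℕ → G) (g : G) :
    ⁅FreeGroup.lift f w, ⁅μ, g⁆⁆ = 1 := by
  set u0 := FreeGroup.lift f w with hu0
  haveI hMN : (marginal (ocVariety w r) G).Normal := marginal_normal _
  have hc1 : ∀ b : G, Commute ⁅u0, μ⁆ b := fun b =>
    commutatorElement_eq_one_iff_commute.mp (marg_1b hw hμ f b)
  have hz1 : Commute ⁅u0, g⁆ μ :=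
    commutatorElement_eq_one_iff_commute.mp (marg_1a hw hμ f g)
  have hmem2 : g * μ⁻¹ * g⁻¹ ∈ marginal (ocVariety w r) G :=
    hMN.conj_mem μ⁻¹ (inv_mem hμ) g
  have hz2 : Commute ⁅u0, g⁆ (g * μ⁻¹ * g⁻¹) :=
    commutatorElement_eq_one_iff_commute.mp (marg_1a hw hmem2 f g)
  rw [commutatorElement_eq_one_iff_commute]
  have hfinal : u0 * ⁅μ, g⁆ * u0⁻¹ = ⁅μ, g⁆ := by
    have T1 : u0 * ⁅μ, g⁆ * u0⁻¹
        = ⁅u0, μ⁆ * (μ * ⁅u0, g⁆ * g * μ⁻¹) * ⁅u0, μ⁆⁻¹ * (g⁻¹ * ⁅u0, g⁆⁻¹) := by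
      simp only [commutatorElement_def]; group
    rw [T1, (hc1 (μ * ⁅u0, g⁆ * g * μ⁻¹)).eq, mul_inv_cancel_right]
    have T2 : μ * ⁅u0, g⁆ * g * μ⁻¹ * (g⁻¹ * ⁅u0, g⁆⁻¹)
        = μ * (⁅u0, g⁆ * (g * μ⁻¹ * g⁻¹)) * ⁅u0, g⁆⁻¹ := by group
    rw [T2, hz2.eq]
    simp only [commutatorElement_def]
    group
  calc u0 * ⁅μ, g⁆ = (u0 * ⁅μ, g⁆ * u0⁻¹) * u0 := by group
  _ = ⁅μ, g⁆ * u0 := by rw [hfinal]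

private lemma verbal_le_comm {r : ℕ} {w : FreeGroup ℕ} :
    verbal (ocVariety w r) G ≤ commutator G := by
  apply (Subgroup.closure_le _).mpr
  rintro g ⟨v, hv, f, rfl⟩
  obtain rfl : v = ⁅⁅w, FreeGroup.of r⁆, FreeGroup.of (r+1)⁆ := hv
  rw [SetLike.mem_coe, lift_ocv]
  exact Subgroup.commutator_mem_commutator (Subgroup.mem_top _) (Subgroup.mem_top _)

end Stmt2Proof

open scoped IsMulCommutative in
private lemma stmt2_main {E : Type u} [Group E] {w : FreeGroup ℕ} {r : ℕ} (hw : IsOCWord 0 r w)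
    (B : Subgroup E) {n : ℕ} (hn : B.index = n) (hn0 : n ≠ 0)
    {x : E} (hxm : x ∈ marginal (ocVariety w r) E) (hxv : x ∈ verbal (ocVariety w r) E)
    (f : ℕ → E) (hf : ∀ i, f i ∈ B) :
    ⁅FreeGroup.lift f w, x ^ n⁆ ∈ verbalOn (ocVariety w r) B := by
  classical
  set u0 : E := FreeGroup.lift f w with hu0
  set VB : Subgroup E := verbalOn (ocVariety w r) B with hVB
  set Mg : Subgroup E := marginal (ocVariety w r) E with hMg
  haveI hMgN : Mg.Normal := marginal_normal _
  set P : Subgroup E := B ⊔ Mg with hP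
  have hu0B : u0 ∈ B := lift_mem_of_mem f hf w
  have hu0P : u0 ∈ P := Subgroup.mem_sup_left hu0B
  have hxP : x ∈ P := Subgroup.mem_sup_right hxm
  -- decomposition of elements of P
  have hdecomp : ∀ p ∈ P, ∃ b ∈ B, ∃ μ ∈ Mg, b * μ = p := by
    intro p hp
    have h1 : p ∈ (↑(B ⊔ Mg) : Set E) := hp
    rw [Subgroup.mul_normal] at h1
    rw [Set.mem_mul] at h1
    obtain ⟨b, hb, μ, hμ, hbm⟩ := h1
    exact ⟨b, hb, μ, hμ, hbm⟩
  -- κ1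
  have k1 : ∀ p ∈ P, ∀ q ∈ P, ⁅⁅u0, p⁆, q⁆ ∈ VB := by
    intro p hp q hq
    obtain ⟨b, hb, μ, hμ, rfl⟩ := hdecomp p hp
    obtain ⟨b', hb', μ', hμ', rfl⟩ := hdecomp q hq
    rw [hu0, marg_strip hw hμ hμ' f b b']
    exact vb_gen_mem hw f hf hb hb'
  -- conjugation stability of VB under P
  have hPnorm : ∀ p ∈ P, ∀ z ∈ VB, p * z * p⁻¹ ∈ VB := by
    intro p hp z hz
    obtain ⟨b, hb, μ, hμ, rfl⟩ := hdecomp p hp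
    have h1 : μ * z * μ⁻¹ = z := by
      rw [(marg_commute_vb hw hμ hz).eq, mul_inv_cancel_right]
    have h2 : b * μ * z * (b * μ)⁻¹ = b * (μ * z * μ⁻¹) * b⁻¹ := by group
    rw [h2, h1]
    exact b_conj_vb hb hz
  haveI hVBP_N : (VB.subgroupOf P).Normal := by
    constructor
    intro z hz p
    rw [Subgroup.mem_subgroupOf] at hz ⊢
    have : ((p * z * p⁻¹ : ↥P) : E) = ↑p * ↑z * (↑p)⁻¹ := by push_cast; ring_nf
    rw [this]
    exact hPnorm ↑p p.2 ↑z hz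
  -- the homomorphism λ
  have hcm : ∀ p : ↥P, ⁅u0, (p : E)⁆ ∈ P := fun p => by
    rw [commutatorElement_def]
    exact mul_mem (mul_mem (mul_mem hu0P p.2) (inv_mem hu0P)) (inv_mem p.2)
  let lam : ↥P →* (↥P ⧸ VB.subgroupOf P) := {
    toFun := fun p => QuotientGroup.mk (⟨⁅u0, (p : E)⁆, hcm p⟩ : ↥P)
    map_one' := by
      show QuotientGroup.mk (⟨⁅u0, ((1 : ↥P) : E)⁆, hcm 1⟩ : ↥P) = 1
      rw [QuotientGroup.eq_one_iff, Subgroup.mem_subgroupOf]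
      show ⁅u0, ((1 : ↥P) : E)⁆ ∈ VB
      have h1 : ⁅u0, ((1 : ↥P) : E)⁆ = 1 := by
        simp [commutatorElement_def]
      rw [h1]
      exact one_mem _
    map_mul' := by
      intro p q
      rw [← QuotientGroup.mk_mul, QuotientGroup.eq, Subgroup.mem_subgroupOf]
      have e : (((⟨⁅u0, ((p * q : ↥P) : E)⁆, hcm (p * q)⟩ : ↥P)⁻¹
            * (⟨⁅u0, (p : E)⁆, hcm p⟩ * ⟨⁅u0, (q : E)⁆, hcm q⟩) : ↥P) : E)
          = ⁅u0, (q : E)⁆⁻¹ * ⁅⁅u0, (q : E)⁆, (p : E)⁆ * (⁅u0, (q : E)⁆⁻¹)⁻¹ := by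
        push_cast
        simp only [commutatorElement_def]
        group
      rw [e]
      exact hPnorm _ (inv_mem (hcm q)) _ (k1 _ q.2 _ p.2)
  }
  have hcent : ∀ p : ↥P, lam p ∈ Subgroup.center (↥P ⧸ VB.subgroupOf P) := by
    intro p
    rw [Subgroup.mem_center_iff]
    intro gq
    refine QuotientGroup.induction_on gq ?_
    intro q
    show QuotientGroup.mk q * QuotientGroup.mk _ = QuotientGroup.mk _ * QuotientGroup.mk q
    rw [← QuotientGroup.mk_mul, ← QuotientGroup.mk_mul, QuotientGroup.eq,
      Subgroup.mem_subgroupOf]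
    have e : (((q * ⟨⁅u0, (p : E)⁆, hcm p⟩)⁻¹ * (⟨⁅u0, (p : E)⁆, hcm p⟩ * q) : ↥P) : E)
        = ⁅u0, (p : E)⁆⁻¹ * ⁅⁅u0, (p : E)⁆, (q : E)⁻¹⁆⁻¹ * (⁅u0, (p : E)⁆⁻¹)⁻¹ := by
      push_cast
      simp only [commutatorElement_def]
      group
    rw [e]
    exact hPnorm _ (inv_mem (hcm p)) _ (inv_mem (k1 _ p.2 _ (inv_mem q.2)))
  let rho : ↥P →* ↥(Subgroup.center (↥P ⧸ VB.subgroupOf P)) :=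
    lam.codRestrict _ hcent
  -- the subgroup N = [marginal, E]
  set Nc : Subgroup E := ⁅Mg, (⊤ : Subgroup E)⁆ with hNc
  haveI hNcN : Nc.Normal := Subgroup.commutator_normal Mg ⊤
  have hNcomm : ∀ z ∈ Nc, ⁅u0, z⁆ = 1 := by
    intro z hz
    have hle : Nc ≤ Subgroup.centralizer {u0} := by
      rw [hNc, Subgroup.commutator_def, Subgroup.closure_le]
      rintro y ⟨μ, hμ, g, -, rfl⟩
      rw [SetLike.mem_coe, Subgroup.mem_centralizer_iff]
      intro c hc
      rw [show c = u0 from hc]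
      exact commutatorElement_eq_one_iff_commute.mp (star_comm hw hμ f g)
    have h1 := hle hz
    rw [Subgroup.mem_centralizer_iff] at h1
    exact commutatorElement_eq_one_iff_commute.mpr (h1 u0 rfl)
  -- quotient by Nc and the transfer
  let pi : E →* E ⧸ Nc := QuotientGroup.mk' Nc
  let F : ↥P →* E ⧸ Nc := pi.comp P.subtype
  have hFker : F.ker ≤ rho.ker := by
    intro p hp
    have hpNc : (p : E) ∈ Nc := by
      have h1 : pi (p : E) = 1 := hp
      rwa [← QuotientGroup.eq_one_iff (p : E)]
    rw [MonoidHom.mem_ker]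
    have hlam1 : lam p = 1 := by
      show QuotientGroup.mk (⟨⁅u0, (p : E)⁆, hcm p⟩ : ↥P) = 1
      rw [QuotientGroup.eq_one_iff, Subgroup.mem_subgroupOf]
      show ⁅u0, (p : E)⁆ ∈ VB
      rw [hNcomm _ hpNc]
      exact one_mem _
    exact Subtype.ext hlam1
  let rhobar := QuotientGroup.lift F.ker rho hFker
  let eiso := QuotientGroup.quotientKerEquivRange F
  let sigma : ↥F.range →* ↥(Subgroup.center (↥P ⧸ VB.subgroupOf P)) :=
    rhobar.comp eiso.symm.toMonoidHom
  have hrange_ge : B.map pi ≤ F.range := by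
    rintro y ⟨b, hb, rfl⟩
    exact ⟨⟨b, Subgroup.mem_sup_left hb⟩, rfl⟩
  have hd_dvd : F.range.index ∣ n := by
    calc F.range.index ∣ (B.map pi).index := Subgroup.index_dvd_of_le hrange_ge
    _ ∣ B.index := B.index_map_dvd (QuotientGroup.mk'_surjective Nc)
    _ = n := hn
  haveI : F.range.FiniteIndex := ⟨by
    intro h0
    rw [h0] at hd_dvd
    exact hn0 (Nat.eq_zero_of_zero_dvd hd_dvd)⟩
  have hxiC : ∀ y : E ⧸ Nc, y * pi x = pi x * y := by
    intro y
    refine QuotientGroup.induction_on y ?_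
    intro g
    show QuotientGroup.mk g * QuotientGroup.mk x = QuotientGroup.mk x * QuotientGroup.mk g
    rw [← QuotientGroup.mk_mul, ← QuotientGroup.mk_mul, QuotientGroup.eq]
    have e : (g * x)⁻¹ * (x * g) = ⁅x⁻¹, g⁻¹⁆ := by
      simp only [commutatorElement_def]; group
    rw [e]
    exact Subgroup.commutator_mem_commutator (inv_mem hxm) (Subgroup.mem_top _)
  have key : ∀ (k : ℕ) (g₀ : E ⧸ Nc),
      g₀⁻¹ * (pi x) ^ k * g₀ ∈ F.range → g₀⁻¹ * (pi x) ^ k * g₀ = (pi x) ^ k := by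
    intro k g₀ _
    have hcom : Commute g₀ ((pi x) ^ k) := (Commute.pow_right (hxiC g₀) k)
    rw [mul_assoc, ← hcom.eq, inv_mul_cancel_left]
  have htr := sigma.transfer_eq_pow (pi x) key
  have htr1 : sigma.transfer (pi x) = 1 := by
    have hxcomm : x ∈ commutator E := verbal_le_comm hxv
    have hxicomm : pi x ∈ commutator (E ⧸ Nc) := by
      have h1 : pi x ∈ (commutator E).map pi := Subgroup.mem_map_of_mem pi hxcomm
      rw [commutator, Subgroup.map_commutator] at h1
      exact Subgroup.commutator_mono le_top le_top h1
    exact MonoidHom.mem_ker.mp (Abelianization.commutator_subset_ker sigma.transfer hxicomm)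
  have hxdP : x ^ F.range.index ∈ P := pow_mem hxP _
  have heval : sigma ⟨(pi x) ^ F.range.index,
      MonoidHom.transfer_eq_pow_aux (pi x) key⟩ = rho ⟨x ^ F.range.index, hxdP⟩ := by
    have hmemF : (pi x) ^ F.range.index = F ⟨x ^ F.range.index, hxdP⟩ := by
      show (pi x) ^ F.range.index = pi (x ^ F.range.index)
      rw [map_pow]
    have harg : (⟨(pi x) ^ F.range.index, MonoidHom.transfer_eq_pow_aux (pi x) key⟩ : ↥F.range)
        = eiso (QuotientGroup.mk ⟨x ^ F.range.index, hxdP⟩) := by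
      refine Subtype.ext ?_
      show pi x ^ F.range.index
          = ((eiso (QuotientGroup.mk ⟨x ^ F.range.index, hxdP⟩) : ↥F.range) : E ⧸ Nc)
      exact hmemF.trans rfl
    rw [harg]
    show rhobar (eiso.symm (eiso _)) = _
    rw [MulEquiv.symm_apply_apply]
    rfl
  have hrho1 : rho ⟨x ^ F.range.index, hxdP⟩ = 1 :=
    heval.symm.trans (htr.symm.trans htr1)
  have hxd_vb : ⁅u0, x ^ F.range.index⁆ ∈ VB := by
    have hlam1 : lam ⟨x ^ F.range.index, hxdP⟩ = 1 := by
      have := congrArg Subtype.val hrho1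
      exact this
    have h2 : QuotientGroup.mk (⟨⁅u0, x ^ F.range.index⁆, hcm ⟨x ^ F.range.index, hxdP⟩⟩ : ↥P)
        = 1 := hlam1
    rw [QuotientGroup.eq_one_iff, Subgroup.mem_subgroupOf] at h2
    exact h2
  -- powering up
  have hcx : Commute ⁅u0, x⁆ x := commutatorElement_eq_one_iff_commute.mp (marg_1b hw hxm f x)
  have hconj : ∀ k : ℕ, ⁅u0, x ^ k⁆ = ⁅u0, x⁆ ^ k := by
    intro k
    induction k with
    | zero => simp
    | succ k ih =>
      have e : ⁅u0, x * x ^ k⁆ = ⁅u0, x⁆ * (x * ⁅u0, x ^ k⁆ * x⁻¹) := by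
        simp only [commutatorElement_def]; group
      have e2 : x * ⁅u0, x⁆ ^ k * x⁻¹ = ⁅u0, x⁆ ^ k := by
        rw [(hcx.symm.pow_right k).eq, mul_inv_cancel_right]
      rw [pow_succ' x k, e, ih, e2, ← pow_succ']
  obtain ⟨e0, he0⟩ := hd_dvd
  rw [hconj n, he0, pow_mul]
  refine pow_mem ?_ e0
  rw [← hconj]
  exact hxd_vb


/-- Lemma 3.3. Let `w` be an outer commutator word of weight `r` and `𝒱`
the variety defined by `[w, x_{r+1}, x_{r+2}]`. Let `B ≤ E` of finite index `n`. If
`x ∈ V*(E) ∩ V(E)` then `[w(y₁,…,y_r), xⁿ] ∈ V(B)` for all `y₁,…,y_r ∈ B`; in particular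
if `L ⊆ V*(E) ∩ V(E)` then `[W(B), Lⁿ] ⊆ V(B)`. -/
theorem stmt2 {E : Type u} [Group E] {w : FreeGroup ℕ} {r : ℕ} (hw : IsOCWord 0 r w)
    (B : Subgroup E) {n : ℕ} (hn : B.index = n) (hn0 : n ≠ 0) :
    (∀ x ∈ marginal (ocVariety w r) E ⊓ verbal (ocVariety w r) E,
      ∀ f : ℕ → E, (∀ i, f i ∈ B) →
        ⁅FreeGroup.lift f w, x ^ n⁆ ∈ verbalOn (ocVariety w r) B) ∧
    (∀ L : Subgroup E, L ≤ marginal (ocVariety w r) E ⊓ verbal (ocVariety w r) E →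
      ⁅verbalOn {w} B, Subgroup.closure ((· ^ n) '' (L : Set E))⁆
        ≤ verbalOn (ocVariety w r) B) := by
  constructor
  · intro x hx f hf
    exact stmt2_main hw B hn hn0 (Subgroup.mem_inf.mp hx).1 (Subgroup.mem_inf.mp hx).2 f hf
  · intro L hL
    rw [Subgroup.commutator_le]
    intro h1 hh1 k hk
    have hS_marg : ∀ k' ∈ Subgroup.closure ((· ^ n) '' (L : Set E)),
        k' ∈ marginal (ocVariety w r) E := by
      intro k' hk'
      refine (Subgroup.closure_le (marginal (ocVariety w r) E)).mpr ?_ hk'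
      rintro y ⟨z, hzL, rfl⟩
      exact pow_mem ((Subgroup.mem_inf.mp (hL hzL)).1) n
    have hWB_B : ∀ h ∈ verbalOn {w} B, h ∈ B := by
      intro h hh
      refine (Subgroup.closure_le B).mpr ?_ hh
      rintro y ⟨v, hv, F, hFB, rfl⟩
      exact lift_mem_of_mem F hFB v
    have hh1' : h1 ∈ Subgroup.closure
        {g | ∃ v ∈ ({w} : Set (FreeGroup ℕ)), ∃ f : ℕ → E, (∀ m, f m ∈ B)
          ∧ FreeGroup.lift f v = g} := hh1
    clear hh1
    induction hh1' using Subgroup.closure_induction with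
    | mem g hg =>
      obtain ⟨v, hv, F, hFB, rfl⟩ := hg
      rw [show v = w from hv]
      have hk' : k ∈ Subgroup.closure ((· ^ n) '' (L : Set E)) := hk
      clear hk
      induction hk' using Subgroup.closure_induction with
      | mem y hy =>
        obtain ⟨z, hzL, rfl⟩ := hy
        exact stmt2_main hw B hn hn0 (Subgroup.mem_inf.mp (hL hzL)).1
          (Subgroup.mem_inf.mp (hL hzL)).2 F hFB
      | one =>
        rw [commutatorElement_one_right]
        exact one_mem _
      | mul k1 k2 hk1 hk2 p1 p2 =>
        have e : ⁅FreeGroup.lift F w, k1 * k2⁆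
            = ⁅FreeGroup.lift F w, k1⁆ * (k1 * ⁅FreeGroup.lift F w, k2⁆ * k1⁻¹) := by
          simp only [commutatorElement_def]; group
        have hc : k1 * ⁅FreeGroup.lift F w, k2⁆ * k1⁻¹ = ⁅FreeGroup.lift F w, k2⁆ := by
          rw [(marg_commute_vb hw (hS_marg k1 hk1) p2).eq, mul_inv_cancel_right]
        rw [e, hc]
        exact mul_mem p1 p2
      | inv k' hk' p =>
        have e : ⁅FreeGroup.lift F w, k'⁻¹⁆
            = k'⁻¹ * ⁅FreeGroup.lift F w, k'⁆⁻¹ * k' := by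
          simp only [commutatorElement_def]; group
        have hc : k'⁻¹ * ⁅FreeGroup.lift F w, k'⁆⁻¹ * k'
            = ⁅FreeGroup.lift F w, k'⁆⁻¹ := by
          rw [(marg_commute_vb hw (inv_mem (hS_marg k' hk')) (inv_mem p)).eq,
            inv_mul_cancel_right]
        rw [e, hc]
        exact inv_mem p
    | one =>
      rw [commutatorElement_one_left]
      exact one_mem _
    | mul g1 g2 hg1 hg2 p1 p2 =>
      have e : ⁅g1 * g2, k⁆ = g1 * ⁅g2, k⁆ * g1⁻¹ * ⁅g1, k⁆ := by
        simp only [commutatorElement_def]; group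
      rw [e]
      exact mul_mem (b_conj_vb (hWB_B g1 hg1) p2) p1
    | inv g hg p =>
      have e : ⁅g⁻¹, k⁆ = g⁻¹ * ⁅g, k⁆⁻¹ * g := by
        simp only [commutatorElement_def]; group
      rw [e]
      have : g⁻¹ * ⁅g, k⁆⁻¹ * g = g⁻¹ * ⁅g, k⁆⁻¹ * (g⁻¹)⁻¹ := by rw [inv_inv]
      rw [this]
      exact b_conj_vb (inv_mem (hWB_B g hg)) (inv_mem p)
end

section
/- Let w = w(x₁,…,x_r) be an outer commutator word and let 𝒱 be the variety of groups defined by the single word [w(x₁,…,x_r), x_{r+1}, x_{r+2}]. Let G be a finite group with a VP cover 1 → L → G* → G → 1, and let H be a subgroup of G of index n with H ≅ B/L for some subgroup B of G* containing L. Let d be the exponent of [W(B), L] and e the exponent of 𝒱B̃₀(H), where W(B) is the verbal subgroup of B with respect to w. Then d divides n·e. -/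
/-! Common framework: varieties of groups, verbal and marginal subgroups,
word values, the `B̃₀`-invariant of a group with respect to a variety. -/

universe u v

open scoped commutatorElement

/-! ### Auxiliary machinery for Statement 6 -/

section Stmt6Aux

open FreeGroup

lemma IsOCWord.lt {a b : ℕ} {w : FreeGroup ℕ} (h : IsOCWord a b w) : a < b := by
  induction h with
  | var i => exact Nat.lt_succ_self i
  | comm h1 h2 ih1 ih2 => exact ih1.trans ih2

lemma IsOCWord.lift_eq {a b : ℕ} {w : FreeGroup ℕ} (h : IsOCWord a b w) :
    ∀ {G : Type*} [Group G] (f g : ℕ → G), (∀ i, a ≤ i → i < b → f i = g i) →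
      FreeGroup.lift f w = FreeGroup.lift g w := by
  induction h with
  | var i =>
      intro G _ f g hfg
      simpa using hfg i le_rfl (Nat.lt_succ_self i)
  | @comm a' b' c' u v h1 h2 ih1 ih2 =>
      intro G _ f g hfg
      rw [map_commutatorElement, map_commutatorElement,
        ih1 f g (fun i hi hib => hfg i hi (hib.trans h2.lt)),
        ih2 f g (fun i hi hic => hfg i (h1.lt.le.trans hi) hic)]

/-- The defining word of the variety `ocVariety w r`. -/
def vword (w : FreeGroup ℕ) (r : ℕ) : FreeGroup ℕ :=
  ⁅⁅w, FreeGroup.of r⁆, FreeGroup.of (r + 1)⁆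

lemma vword_mem_ocVariety (w : FreeGroup ℕ) (r : ℕ) : vword w r ∈ ocVariety w r := rfl

lemma eq_vword_of_mem {w : FreeGroup ℕ} {r : ℕ} {v : FreeGroup ℕ}
    (hv : v ∈ ocVariety w r) : v = vword w r := hv

lemma lift_vword {G : Type*} [Group G] (w : FreeGroup ℕ) (r : ℕ) (f : ℕ → G) :
    FreeGroup.lift f (vword w r) = ⁅⁅FreeGroup.lift f w, f r⁆, f (r + 1)⁆ := by
  simp [vword, map_commutatorElement]

lemma lift_vword_mul_marginal {G : Type*} [Group G] {w : FreeGroup ℕ} {r : ℕ}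
    (hw : IsOCWord 0 r w) (f ℓ : ℕ → G) (hℓ : ∀ i, ℓ i ∈ marginal (ocVariety w r) G) :
    FreeGroup.lift (fun i => f i * ℓ i) (vword w r) = FreeGroup.lift f (vword w r) := by
  have key : ∀ k : ℕ, FreeGroup.lift (fun i => if i < k then f i * ℓ i else f i) (vword w r)
      = FreeGroup.lift f (vword w r) := by
    intro k
    induction k with
    | zero => simp
    | succ k ih =>
        have hupd : (fun i => if i < k + 1 then f i * ℓ i else f i)
            = Function.update (fun i => if i < k then f i * ℓ i else f i) k
              ((if k < k then f k * ℓ k else f k) * ℓ k) := by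
          funext i
          rcases eq_or_ne i k with rfl | hik
          · simp
          · rw [Function.update_of_ne hik]
            rcases lt_or_ge i k with h1 | h1
            · simp [h1, h1.trans (Nat.lt_succ_self k)]
            · have h2 : ¬ i < k + 1 := fun hc => hik (le_antisymm (Nat.lt_succ_iff.mp hc) h1)
              simp [not_lt.mpr h1, h2]
        rw [hupd, hℓ k (vword w r) (vword_mem_ocVariety w r)
          (fun i => if i < k then f i * ℓ i else f i) k, ih]
  have hsup : FreeGroup.lift (fun i => f i * ℓ i) (vword w r)
      = FreeGroup.lift (fun i => if i < r + 2 then f i * ℓ i else f i) (vword w r) := by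
    rw [lift_vword, lift_vword,
      hw.lift_eq (fun i => f i * ℓ i) (fun i => if i < r + 2 then f i * ℓ i else f i)
        (fun i _ hir => by simp [hir.trans (by omega : r < r + 2)])]
    simp [show r < r + 2 by omega, show r + 1 < r + 2 by omega]
  rw [hsup, key (r + 2)]

lemma vword_value_descent {G Gs : Type*} [Group G] [Group Gs] {w : FreeGroup ℕ} {r : ℕ}
    (hw : IsOCWord 0 r w) (π : Gs →* G) (hm : π.ker ≤ marginal (ocVariety w r) Gs)
    (f g : ℕ → Gs) (hfg : ∀ i, π (f i) = π (g i)) :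
    FreeGroup.lift f (vword w r) = FreeGroup.lift g (vword w r) := by
  have hfun : (fun i => g i * ((g i)⁻¹ * f i)) = f := by funext i; group
  rw [← hfun]
  exact lift_vword_mul_marginal hw g (fun i => (g i)⁻¹ * f i)
    (fun i => hm (by simp [MonoidHom.mem_ker, hfg i]))

lemma vword_value_eq_one {G Gs : Type*} [Group G] [Group Gs] {w : FreeGroup ℕ} {r : ℕ}
    (hw : IsOCWord 0 r w) (π : Gs →* G) (hm : π.ker ≤ marginal (ocVariety w r) Gs)
    (hlift : HasVPLifts (ocVariety w r) π) (f : ℕ → Gs)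
    (hmem : FreeGroup.lift f (vword w r) ∈ π.ker) :
    FreeGroup.lift f (vword w r) = 1 := by
  have hcomp : π.comp (FreeGroup.lift f) = FreeGroup.lift (fun i => π (f i)) := by
    apply FreeGroup.ext_hom; intro a; simp
  have hπ : FreeGroup.lift (fun i => π (f i)) (vword w r) = 1 := by
    rw [← hcomp]
    simpa [MonoidHom.mem_ker] using hmem
  obtain ⟨g, hg1, hg2⟩ := hlift (vword w r) (vword_mem_ocVariety w r) (fun i => π (f i)) hπ
  rw [vword_value_descent hw π hm f g (fun i => (hg1 i).symm)]
  exact hg2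

end Stmt6Aux


section Stmt6Pairing

open FreeGroup

variable {G Gs : Type*} [Group G] [Group Gs] {w : FreeGroup ℕ} {r : ℕ}

lemma pairing_comm1 (hw : IsOCWord 0 r w) (π : Gs →* G)
    (hm : π.ker ≤ marginal (ocVariety w r) Gs) (f : ℕ → Gs) (u : Gs) {ℓ : Gs}
    (hℓ : ℓ ∈ π.ker) : ⁅⁅FreeGroup.lift f w, u⁆, ℓ⁆ = 1 := by
  classical
  set h : ℕ → Gs := fun i => if i < r then f i else if i = r then u else 1 with hh
  have hw1 : ∀ (h' : ℕ → Gs), (∀ i, i < r → h' i = f i) →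
      FreeGroup.lift h' w = FreeGroup.lift f w :=
    fun h' hp => hw.lift_eq _ _ (fun i _ hir => hp i hir)
  have hmar := (hm hℓ) (vword w r) (vword_mem_ocVariety w r) h (r + 1)
  rw [lift_vword, lift_vword] at hmar
  have e1 : Function.update h (r + 1) (h (r + 1) * ℓ) r = u := by
    rw [Function.update_of_ne (by omega)]
    simp [hh]
  have e2 : Function.update h (r + 1) (h (r + 1) * ℓ) (r + 1) = ℓ := by
    rw [Function.update_self]
    simp [hh, show ¬ (r + 1 < r) by omega, show ¬ (r + 1 = r) by omega]
  have e3 : FreeGroup.lift (Function.update h (r + 1) (h (r + 1) * ℓ)) w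
      = FreeGroup.lift f w := by
    apply hw1
    intro i hir
    rw [Function.update_of_ne (by omega)]
    simp [hh, hir]
  have e4 : h r = u := by simp [hh]
  have e5 : h (r + 1) = 1 := by
    simp [hh, show ¬ (r + 1 < r) by omega, show ¬ (r + 1 = r) by omega]
  have e6 : FreeGroup.lift h w = FreeGroup.lift f w := hw1 _ (fun i hir => by simp [hh, hir])
  rw [e1, e2, e3, e4, e5, e6] at hmar
  simpa using hmar

lemma pairing_comm2 (hw : IsOCWord 0 r w) (π : Gs →* G)
    (hm : π.ker ≤ marginal (ocVariety w r) Gs) (f : ℕ → Gs) (y : Gs) {ℓ : Gs}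
    (hℓ : ℓ ∈ π.ker) : ⁅⁅FreeGroup.lift f w, ℓ⁆, y⁆ = 1 := by
  classical
  set h : ℕ → Gs := fun i => if i < r then f i else if i = r then 1 else y with hh
  have hw1 : ∀ (h' : ℕ → Gs), (∀ i, i < r → h' i = f i) →
      FreeGroup.lift h' w = FreeGroup.lift f w :=
    fun h' hp => hw.lift_eq _ _ (fun i _ hir => hp i hir)
  have hmar := (hm hℓ) (vword w r) (vword_mem_ocVariety w r) h r
  rw [lift_vword, lift_vword] at hmar
  have e1 : Function.update h r (h r * ℓ) r = ℓ := by
    rw [Function.update_self]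
    simp [hh]
  have e2 : Function.update h r (h r * ℓ) (r + 1) = y := by
    rw [Function.update_of_ne (by omega)]
    simp [hh, show ¬ (r + 1 < r) by omega, show ¬ (r + 1 = r) by omega]
  have e3 : FreeGroup.lift (Function.update h r (h r * ℓ)) w = FreeGroup.lift f w := by
    apply hw1
    intro i hir
    rw [Function.update_of_ne (by omega)]
    simp [hh, hir]
  have e4 : h r = (1 : Gs) := by simp [hh]
  have e5 : h (r + 1) = y := by
    simp [hh, show ¬ (r + 1 < r) by omega, show ¬ (r + 1 = r) by omega]
  have e6 : FreeGroup.lift h w = FreeGroup.lift f w := hw1 _ (fun i hir => by simp [hh, hir])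
  rw [e1, e2, e3, e4, e5, e6] at hmar
  simpa using hmar

lemma pairing_central (hw : IsOCWord 0 r w) (π : Gs →* G)
    (hm : π.ker ≤ marginal (ocVariety w r) Gs) (f : ℕ → Gs) {ℓ : Gs}
    (hℓ : ℓ ∈ π.ker) (t : Gs) : ⁅FreeGroup.lift f w, ℓ⁆ * t = t * ⁅FreeGroup.lift f w, ℓ⁆ :=
  commutatorElement_eq_one_iff_commute.mp (pairing_comm2 hw π hm f t hℓ)

lemma pairing_mul (hw : IsOCWord 0 r w) (π : Gs →* G)
    (hm : π.ker ≤ marginal (ocVariety w r) Gs) (f : ℕ → Gs) {ℓ ℓ' : Gs}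
    (hℓ : ℓ ∈ π.ker) (hℓ' : ℓ' ∈ π.ker) :
    ⁅FreeGroup.lift f w, ℓ * ℓ'⁆ = ⁅FreeGroup.lift f w, ℓ⁆ * ⁅FreeGroup.lift f w, ℓ'⁆ := by
  set W := FreeGroup.lift f w with hW
  have hid : ⁅W, ℓ * ℓ'⁆ = ⁅W, ℓ⁆ * (ℓ * ⁅W, ℓ'⁆ * ℓ⁻¹) := by
    simp only [commutatorElement_def]
    group
  have hcon : ℓ * ⁅W, ℓ'⁆ * ℓ⁻¹ = ⁅W, ℓ'⁆ := by
    rw [← pairing_central hw π hm f hℓ' ℓ]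
    group
    rfl
  rw [hid, hcon]

lemma pairing_conj (hw : IsOCWord 0 r w) (π : Gs →* G)
    (hm : π.ker ≤ marginal (ocVariety w r) Gs) (f : ℕ → Gs) (g : Gs) {ℓ : Gs}
    (hℓ : ℓ ∈ π.ker) :
    ⁅FreeGroup.lift f w, g * ℓ * g⁻¹⁆ = ⁅FreeGroup.lift f w, ℓ⁆ := by
  set W := FreeGroup.lift f w with hW
  have hℓ2 : g * ℓ * g⁻¹ ∈ π.ker := π.normal_ker.conj_mem ℓ hℓ g
  have hz : ∀ t : Gs, ⁅W, ℓ⁆ * t = t * ⁅W, ℓ⁆ := pairing_central hw π hm f hℓ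
  have hcmm : Commute ⁅W, g⁆ (g * ℓ * g⁻¹) :=
    commutatorElement_eq_one_iff_commute.mp (pairing_comm1 hw π hm f g hℓ2)
  have step1 : ⁅W, g * ℓ * g⁻¹⁆
      = ⁅W, g⁆ * (g * (⁅W, ℓ⁆ * (ℓ * (g⁻¹ * ⁅W, g⁆⁻¹ * g) * ℓ⁻¹)) * g⁻¹) := by
    simp only [commutatorElement_def]
    group
  have hzg : g * ⁅W, ℓ⁆ = ⁅W, ℓ⁆ * g := (hz g).symm
  have step2 : g * (⁅W, ℓ⁆ * (ℓ * (g⁻¹ * ⁅W, g⁆⁻¹ * g) * ℓ⁻¹)) * g⁻¹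
      = ⁅W, ℓ⁆ * ((g * ℓ * g⁻¹) * ⁅W, g⁆⁻¹ * (g * ℓ * g⁻¹)⁻¹) := by
    calc g * (⁅W, ℓ⁆ * (ℓ * (g⁻¹ * ⁅W, g⁆⁻¹ * g) * ℓ⁻¹)) * g⁻¹
        = (g * ⁅W, ℓ⁆) * ((ℓ * (g⁻¹ * ⁅W, g⁆⁻¹ * g) * ℓ⁻¹) * g⁻¹) := by group
      _ = (⁅W, ℓ⁆ * g) * ((ℓ * (g⁻¹ * ⁅W, g⁆⁻¹ * g) * ℓ⁻¹) * g⁻¹) := by rw [hzg]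
      _ = ⁅W, ℓ⁆ * ((g * ℓ * g⁻¹) * ⁅W, g⁆⁻¹ * (g * ℓ * g⁻¹)⁻¹) := by group
  have step3 : (g * ℓ * g⁻¹) * ⁅W, g⁆⁻¹ * (g * ℓ * g⁻¹)⁻¹ = ⁅W, g⁆⁻¹ := by
    have h1 : ⁅W, g⁆⁻¹ * (g * ℓ * g⁻¹) = (g * ℓ * g⁻¹) * ⁅W, g⁆⁻¹ := hcmm.inv_left.eq
    rw [← h1]
    group
  have step4 : ⁅W, g⁆ * ⁅W, ℓ⁆ * ⁅W, g⁆⁻¹ = ⁅W, ℓ⁆ := by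
    rw [mul_assoc, hz ⁅W, g⁆⁻¹]
    group
  calc ⁅W, g * ℓ * g⁻¹⁆
      = ⁅W, g⁆ * (g * (⁅W, ℓ⁆ * (ℓ * (g⁻¹ * ⁅W, g⁆⁻¹ * g) * ℓ⁻¹)) * g⁻¹) := step1
    _ = ⁅W, g⁆ * (⁅W, ℓ⁆ * ((g * ℓ * g⁻¹) * ⁅W, g⁆⁻¹ * (g * ℓ * g⁻¹)⁻¹)) := by rw [step2]
    _ = ⁅W, g⁆ * (⁅W, ℓ⁆ * ⁅W, g⁆⁻¹) := by rw [step3]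
    _ = ⁅W, g⁆ * ⁅W, ℓ⁆ * ⁅W, g⁆⁻¹ := by group
    _ = ⁅W, ℓ⁆ := step4

end Stmt6Pairing


section Stmt6Torsion

open FreeGroup

/-- Elements of `verbalOn V B` lying in the kernel are killed by the exponent of `𝒱B̃₀(H)`. -/
lemma pow_exponent_vB0_eq_one {G : Type u} {Gs : Type v} [Group G] [Group Gs]
    {w : FreeGroup ℕ} {r : ℕ} (hw : IsOCWord 0 r w)
    (π : Gs →* G) (hm : π.ker ≤ marginal (ocVariety w r) Gs)
    (hlift : HasVPLifts (ocVariety w r) π)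
    (H : Subgroup G) (B : Subgroup Gs) (hBH : B.map π = H)
    {y : Gs} (hy : y ∈ verbalOn (ocVariety w r) B) (hyL : y ∈ π.ker) :
    y ^ Monoid.exponent (vB0 (ocVariety w r) ↥H) = 1 := by
  classical
  -- a section of `π` over `H` through `B`
  have hsec : ∀ h : ↥H, ∃ z : Gs, z ∈ B ∧ π z = (h : G) := by
    intro h
    have h2 : (h : G) ∈ B.map π := by rw [hBH]; exact h.2
    obtain ⟨z, hz, hπz⟩ := h2
    exact ⟨z, hz, hπz⟩
  choose s hsB hsπ using hsec
  set σ : FreeGroup ↥H →* Gs := FreeGroup.lift s with hσ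
  have hcomp : π.comp σ = (H.subtype).comp (presHom ↥H) := by
    apply FreeGroup.ext_hom
    intro h
    simp [hσ, presHom, hsπ]
  -- σ kills the denominator
  have hden : vB0Den (ocVariety w r) ↥H ≤ σ.ker := by
    rw [vB0Den]
    refine (Subgroup.closure_le _).mpr ?_
    rintro t ⟨⟨v, hv, fh, rfl⟩, ht2⟩
    have hv' : v = vword w r := eq_vword_of_mem hv
    subst hv'
    have hc : σ.comp (FreeGroup.lift fh) = FreeGroup.lift (fun i => σ (fh i)) := by
      apply FreeGroup.ext_hom; intro a; simp
    have hval : σ (FreeGroup.lift fh (vword w r))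
        = FreeGroup.lift (fun i => σ (fh i)) (vword w r) := by
      rw [← hc]; rfl
    have hker : σ (FreeGroup.lift fh (vword w r)) ∈ π.ker := by
      rw [MonoidHom.mem_ker, ← MonoidHom.comp_apply, hcomp, MonoidHom.comp_apply]
      have : presHom ↥H (FreeGroup.lift fh (vword w r)) = 1 := ht2
      rw [this]
      exact map_one _
    show σ (FreeGroup.lift fh (vword w r)) = 1
    rw [hval] at hker ⊢
    exact vword_value_eq_one hw π hm hlift _ hker
  -- verbalOn V B is inside the image of the verbal subgroup of the free group on H
  have himg : verbalOn (ocVariety w r) B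
      ≤ (verbal (ocVariety w r) (FreeGroup ↥H)).map σ := by
    refine (Subgroup.closure_le _).mpr ?_
    rintro y0 ⟨v, hv, fb, hfB, rfl⟩
    have hv' : v = vword w r := eq_vword_of_mem hv
    subst hv'
    have hmemH : ∀ i, π (fb i) ∈ H := fun i => by
      rw [← hBH]; exact ⟨fb i, hfB i, rfl⟩
    set fh : ℕ → FreeGroup ↥H := fun i => FreeGroup.of ⟨π (fb i), hmemH i⟩ with hfh
    have hc : σ.comp (FreeGroup.lift fh) = FreeGroup.lift (fun i => s ⟨π (fb i), hmemH i⟩) := by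
      apply FreeGroup.ext_hom; intro a; simp [hfh, hσ]
    refine ⟨FreeGroup.lift fh (vword w r),
      Subgroup.subset_closure ⟨vword w r, vword_mem_ocVariety w r, fh, rfl⟩, ?_⟩
    have hval : σ (FreeGroup.lift fh (vword w r))
        = FreeGroup.lift (fun i => s ⟨π (fb i), hmemH i⟩) (vword w r) := by
      rw [← hc]; rfl
    rw [hval]
    exact vword_value_descent hw π hm _ fb (fun i => by rw [hsπ])
  obtain ⟨x, hxverb, hxy⟩ := himg hy
  have hxker : x ∈ presKer ↥H := by
    have h1 : H.subtype (presHom ↥H x) = 1 := by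
      rw [← MonoidHom.comp_apply, ← hcomp, MonoidHom.comp_apply, hxy]
      simpa [MonoidHom.mem_ker] using hyL
    have h2 : presHom ↥H x = 1 := by
      apply Subgroup.subtype_injective
      simpa using h1
    exact h2
  have hxnum : x ∈ vB0Num (ocVariety w r) ↥H := ⟨hxker, hxverb⟩
  set e := Monoid.exponent (vB0 (ocVariety w r) ↥H) with he
  set N := (vB0Den (ocVariety w r) ↥H).subgroupOf (vB0Num (ocVariety w r) ↥H) with hN
  have hξ : (QuotientGroup.mk' N ⟨x, hxnum⟩ : vB0 (ocVariety w r) ↥H) ^ e = 1 :=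
    Monoid.pow_exponent_eq_one _
  rw [← map_pow, QuotientGroup.mk'_apply, QuotientGroup.eq_one_iff] at hξ
  have hxe : x ^ e ∈ vB0Den (ocVariety w r) ↥H := by
    have := (Subgroup.mem_subgroupOf).mp hξ
    simpa using this
  calc y ^ e = σ (x ^ e) := by rw [map_pow, hxy]
    _ = 1 := hden hxe

end Stmt6Torsion


section Stmt6Transfer

open FreeGroup MulAction
open scoped IsMulCommutative

variable {G Gs : Type*} [Group G] [Group Gs] {w : FreeGroup ℕ} {r : ℕ}

lemma coe_commutator_subgroup {B : Subgroup Gs} (x y : ↥B) :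
    ((⁅x, y⁆ : ↥B) : Gs) = ⁅(x : Gs), (y : Gs)⁆ := by
  simp [commutatorElement_def]

lemma verbalOn_conj_mem {B : Subgroup Gs} {c : Gs} (hc : c ∈ B) {d : Gs}
    (hd : d ∈ verbalOn (ocVariety w r) B) :
    c * d * c⁻¹ ∈ verbalOn (ocVariety w r) B := by
  induction hd using Subgroup.closure_induction with
  | mem g hg =>
      obtain ⟨v, hv, fb, hfB, rfl⟩ := hg
      refine Subgroup.subset_closure ⟨v, hv, fun i => c * fb i * c⁻¹,
        fun i => mul_mem (mul_mem hc (hfB i)) (inv_mem hc), ?_⟩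
      rw [FreeGroup.lift_conj]
  | one => simpa using (verbalOn (ocVariety w r) B).one_mem
  | mul a b _ _ pa pb =>
      have h : c * (a * b) * c⁻¹ = (c * a * c⁻¹) * (c * b * c⁻¹) := by group
      rw [h]; exact mul_mem pa pb
  | inv a _ pa =>
      have h : c * a⁻¹ * c⁻¹ = (c * a * c⁻¹)⁻¹ := by group
      rw [h]; exact inv_mem pa

/-- The key transfer argument: the `index`-th power of the pairing of a `w`-value over `B`
with an element of the kernel lies in the verbal subgroup over `B`. -/
lemma comm_pow_index_mem_verbalOn (hw : IsOCWord 0 r w) (π : Gs →* G)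
    (hm : π.ker ≤ marginal (ocVariety w r) Gs)
    (hstem : π.ker ≤ verbal (ocVariety w r) Gs)
    (B : Subgroup Gs) (hLB : π.ker ≤ B) [B.FiniteIndex]
    (f : ℕ → Gs) (hfB : ∀ i, f i ∈ B) {a : Gs} (ha : a ∈ π.ker) :
    ⁅FreeGroup.lift f w, a⁆ ^ B.index ∈ verbalOn (ocVariety w r) B := by
  classical
  set b : Gs := FreeGroup.lift f w with hb
  set fB : ℕ → ↥B := fun i => ⟨f i, hfB i⟩ with hfBdef
  set bB : ↥B := FreeGroup.lift fB w with hbB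
  have hbco : (bB : Gs) = b := by
    have h : (B.subtype).comp (FreeGroup.lift fB) = FreeGroup.lift f := by
      apply FreeGroup.ext_hom; intro i; simp [hfBdef]
    rw [hbB, hb, ← h]; rfl
  set aB : ↥B := ⟨a, hLB ha⟩ with haBdef
  set DB : Subgroup ↥B := (verbalOn (ocVariety w r) B).subgroupOf B with hDB
  haveI hDBn : DB.Normal := by
    constructor
    intro x hx c
    rw [hDB, Subgroup.mem_subgroupOf] at hx ⊢
    have h : ((c * x * c⁻¹ : ↥B) : Gs) = (c : Gs) * (x : Gs) * (c : Gs)⁻¹ := by push_cast; rfl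
    rw [h]
    exact verbalOn_conj_mem c.2 hx
  have hgen : ∀ u v' : Gs, u ∈ B → v' ∈ B → ⁅⁅b, u⁆, v'⁆ ∈ verbalOn (ocVariety w r) B := by
    intro u v' hu hv'
    refine Subgroup.subset_closure ⟨vword w r, vword_mem_ocVariety w r,
      fun i => if i < r then f i else if i = r then u else v', ?_, ?_⟩
    · intro i
      dsimp only
      split
      · exact hfB i
      · split
        · exact hu
        · exact hv'
    · rw [lift_vword]
      have h1 : FreeGroup.lift (fun i => if i < r then f i else if i = r then u else v') w
          = FreeGroup.lift f w := hw.lift_eq _ _ (fun i _ hir => by simp [hir])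
      have h2 : (if r < r then f r else if r = r then u else v') = u := by simp
      have h3 : (if r + 1 < r then f (r + 1) else if r + 1 = r then u else v') = v' := by
        simp [show ¬ (r + 1 < r) by omega, show ¬ (r + 1 = r) by omega]
      rw [h1, h2, h3, hb]
  have hvalDB : ∀ y z : ↥B, ⁅⁅bB, y⁆, z⁆ ∈ DB := by
    intro y z
    rw [hDB, Subgroup.mem_subgroupOf]
    have h : ((⁅⁅bB, y⁆, z⁆ : ↥B) : Gs) = ⁅⁅b, (y : Gs)⁆, (z : Gs)⁆ := by
      rw [coe_commutator_subgroup, coe_commutator_subgroup, hbco]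
    rw [h]
    exact hgen _ _ y.2 z.2
  set mkQ := QuotientGroup.mk' DB with hmkQ
  have hcen : ∀ y : ↥B, mkQ ⁅bB, y⁆ ∈ Subgroup.center (↥B ⧸ DB) := by
    intro y
    rw [Subgroup.mem_center_iff]
    intro q
    induction q using QuotientGroup.induction_on with
    | _ z =>
        show mkQ z * mkQ ⁅bB, y⁆ = mkQ ⁅bB, y⁆ * mkQ z
        rw [← _root_.map_mul, ← _root_.map_mul, QuotientGroup.mk'_eq_mk']
        refine ⟨⁅⁅bB, y⁆⁻¹, z⁻¹⁆, ?_, ?_⟩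
        · have hconj := hDBn.conj_mem _ (DB.inv_mem (hvalDB y z⁻¹)) ⁅bB, y⁆⁻¹
          have heq : ⁅⁅bB, y⁆⁻¹, z⁻¹⁆ = ⁅bB, y⁆⁻¹ * ⁅⁅bB, y⁆, z⁻¹⁆⁻¹ * (⁅bB, y⁆⁻¹)⁻¹ := by
            simp only [commutatorElement_def]
            group
          rw [heq]; exact hconj
        · simp only [commutatorElement_def]
          group
  set φ : ↥B →* ↥(Subgroup.center (↥B ⧸ DB)) :=
    { toFun := fun y => ⟨mkQ ⁅bB, y⁆, hcen y⟩
      map_one' := by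
        ext
        show mkQ ⁅bB, (1 : ↥B)⁆ = 1
        rw [commutatorElement_one_right]
        exact _root_.map_one _
      map_mul' := by
        intro y z
        ext
        show mkQ ⁅bB, y * z⁆ = mkQ ⁅bB, y⁆ * mkQ ⁅bB, z⁆
        rw [← _root_.map_mul, QuotientGroup.mk'_eq_mk']
        refine ⟨⁅y, ⁅bB, z⁆⁻¹⁆, ?_, ?_⟩
        · have hconj := hDBn.conj_mem _ (hvalDB z y) ⁅bB, z⁆⁻¹
          have heq : ⁅y, ⁅bB, z⁆⁻¹⁆ = ⁅bB, z⁆⁻¹ * ⁅⁅bB, z⁆, y⁆ * (⁅bB, z⁆⁻¹)⁻¹ := by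
            simp only [commutatorElement_def]
            group
          rw [heq]; exact hconj
        · simp only [commutatorElement_def]
          group } with hφ
  set Ver : Gs →* ↥(Subgroup.center (↥B ⧸ DB)) := MonoidHom.transfer φ with hVer
  have hVa : Ver a = 1 := by
    have hker : verbal (ocVariety w r) Gs ≤ Ver.ker := by
      refine (Subgroup.closure_le _).mpr ?_
      rintro t ⟨v, hv, ft, rfl⟩
      have hv' : v = vword w r := eq_vword_of_mem hv
      subst hv'
      rw [SetLike.mem_coe, MonoidHom.mem_ker, lift_vword, map_commutatorElement]
      exact commutatorElement_eq_one_iff_commute.mpr (Commute.all _ _)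
    exact hker (hstem ha)
  have hfix : ∀ x : Gs ⧸ B, a • x = x := by
    intro x
    induction x using QuotientGroup.induction_on with
    | _ z =>
        have h1 : a • ((z : Gs) : Gs ⧸ B) = ((a * z : Gs) : Gs ⧸ B) := by
          rw [MulAction.Quotient.smul_mk, smul_eq_mul]
        rw [h1, QuotientGroup.eq]
        have h2 := hLB (π.normal_ker.conj_mem a⁻¹ (inv_mem ha) z⁻¹)
        rw [inv_inv] at h2
        have h3 : (a * z)⁻¹ * z = z⁻¹ * a⁻¹ * z := by group
        rw [h3]
        exact h2
  have hmp : ∀ x : Gs ⧸ B, Function.minimalPeriod (a • ·) x = 1 := fun x =>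
    Function.minimalPeriod_eq_one_iff_isFixedPt.mpr (hfix x)
  haveI : Fintype (Gs ⧸ B) := B.fintypeQuotientOfFiniteIndex
  haveI : Fintype (Quotient (orbitRel (Subgroup.zpowers a) (Gs ⧸ B))) := Fintype.ofFinite _
  have heval := MonoidHom.transfer_eq_prod_quotient_orbitRel_zpowers_quot φ a
  have hconst : ∀ (q : Quotient (orbitRel (Subgroup.zpowers a) (Gs ⧸ B)))
      (hq : q.out.out⁻¹ * a ^ Function.minimalPeriod (a • ·) q.out * q.out.out ∈ B),
      φ ⟨q.out.out⁻¹ * a ^ Function.minimalPeriod (a • ·) q.out * q.out.out, hq⟩ = φ aB := by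
    intro q hq
    have hcommeq : ⁅bB, (⟨q.out.out⁻¹ * a ^ Function.minimalPeriod (a • ·) q.out * q.out.out,
        hq⟩ : ↥B)⁆ = ⁅bB, aB⁆ := by
      apply Subtype.ext
      rw [coe_commutator_subgroup, coe_commutator_subgroup, hbco]
      show ⁅b, q.out.out⁻¹ * a ^ Function.minimalPeriod (a • ·) q.out * q.out.out⁆ = ⁅b, a⁆
      rw [hmp q.out, pow_one]
      have h4 : q.out.out⁻¹ * a * q.out.out = q.out.out⁻¹ * a * (q.out.out⁻¹)⁻¹ := by
        rw [inv_inv]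
      rw [h4, hb]
      exact pairing_conj hw π hm f (q.out.out)⁻¹ ha
    show (⟨mkQ ⁅bB, _⁆, _⟩ : ↥(Subgroup.center (↥B ⧸ DB))) = ⟨mkQ ⁅bB, aB⁆, _⟩
    apply Subtype.ext
    show mkQ ⁅bB, _⁆ = mkQ ⁅bB, aB⁆
    rw [hcommeq]
  have h0 : MonoidHom.transfer φ a
      = ∏ _q : Quotient (orbitRel (Subgroup.zpowers a) (Gs ⧸ B)), φ aB := by
    rw [heval]
    exact Finset.prod_congr rfl (fun q _ => hconst q _)
  have hVa' : (∏ _q : Quotient (orbitRel (Subgroup.zpowers a) (Gs ⧸ B)), φ aB) = 1 := by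
    rw [← h0]
    exact hVa
  rw [Finset.prod_const, Finset.card_univ] at hVa'
  -- the number of orbits equals the index
  have hcard : Fintype.card (Quotient (orbitRel (Subgroup.zpowers a) (Gs ⧸ B))) = B.index := by
    have haker : a ∈ (MulAction.toPermHom Gs (Gs ⧸ B)).ker := by
      rw [MonoidHom.mem_ker]
      ext x
      exact hfix x
    have hfixz : ∀ z ∈ Subgroup.zpowers a, ∀ x : Gs ⧸ B, z • x = x := by
      intro z hz x
      have hzker : MulAction.toPermHom Gs (Gs ⧸ B) z = 1 :=
        Subgroup.zpowers_le.mpr haker hz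
      calc z • x = (MulAction.toPermHom Gs (Gs ⧸ B) z) x := rfl
        _ = x := by rw [hzker]; rfl
    have hbij : Function.Bijective
        (Quotient.mk'' : (Gs ⧸ B) → Quotient (orbitRel (Subgroup.zpowers a) (Gs ⧸ B))) := by
      constructor
      · intro x y hxy
        have hrel : x ∈ MulAction.orbit (Subgroup.zpowers a) y := by
          rw [← MulAction.orbitRel_apply]
          exact Quotient.eq''.mp hxy
        obtain ⟨u, hu⟩ := MulAction.mem_orbit_iff.mp hrel
        have hu' : ((u : Gs)) • y = x := hu
        rw [hfixz (u : Gs) u.2 y] at hu'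
        exact hu'.symm
      · intro q
        obtain ⟨x, hx⟩ := Quotient.exists_rep q
        exact ⟨x, hx⟩
    rw [← Fintype.card_congr (Equiv.ofBijective _ hbij), Subgroup.index_eq_card,
      Nat.card_eq_fintype_card]
  rw [hcard] at hVa'
  -- extract the conclusion
  have h1 : (mkQ ⁅bB, aB⁆) ^ B.index = 1 := by
    have := congrArg (Subtype.val) hVa'
    simpa [hφ] using this
  rw [← _root_.map_pow, QuotientGroup.mk'_apply, QuotientGroup.eq_one_iff] at h1
  rw [hDB, Subgroup.mem_subgroupOf] at h1
  have h3 : ((⁅bB, aB⁆ ^ B.index : ↥B) : Gs) = ⁅b, a⁆ ^ B.index := by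
    rw [SubgroupClass.coe_pow, coe_commutator_subgroup, hbco]
  rw [hb] at h3
  exact h3 ▸ h1

end Stmt6Transfer

/-- Corollary 3.7. With the notation of Theorem 3.4: if `d` is the exponent
of `[W(B), L]` (with `L ≅ 𝒱B̃₀(G)`) and `e` is the exponent of `𝒱B̃₀(H)`, then `d ∣ n·e`. -/
theorem stmt6 {G : Type u} {Gs : Type v} [Group G] [Group Gs] [Finite G]
    {w : FreeGroup ℕ} {r : ℕ} (hw : IsOCWord 0 r w)
    (L : Subgroup Gs) (π : Gs →* G) (hcover : IsVPCover (ocVariety w r) L π)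
    (H : Subgroup G) {n : ℕ} (hn : H.index = n)
    (B : Subgroup Gs) (hLB : L ≤ B) (hBH : B.map π = H)
    {d e : ℕ} (hd : d = Monoid.exponent ↥(⁅verbalOn {w} B, L⁆ : Subgroup Gs))
    (he : e = Monoid.exponent (vB0 (ocVariety w r) ↥H)) :
    d ∣ n * e := by
  obtain ⟨hsurj, hker, hmarg, hstem, hlifts, _hiso⟩ := hcover
  subst hker
  subst hn
  subst hd
  subst he
  set e := Monoid.exponent (vB0 (ocVariety w r) ↥H) with hedef
  -- `B` is the full preimage of `H`, so it has index `H.index`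
  have hBcomap : B = Subgroup.comap π H := by
    apply le_antisymm
    · intro x hx
      rw [Subgroup.mem_comap, ← hBH]
      exact ⟨x, hx, rfl⟩
    · intro x hx
      rw [Subgroup.mem_comap, ← hBH] at hx
      obtain ⟨z, hzB, hzx⟩ := hx
      have h1 : z⁻¹ * x ∈ π.ker := by
        rw [MonoidHom.mem_ker, map_mul, map_inv, hzx]
        group
      have h2 : x = z * (z⁻¹ * x) := by group
      rw [h2]
      exact B.mul_mem hzB (hLB h1)
  have hBidx : B.index = H.index := by
    rw [hBcomap, Subgroup.index_comap_of_surjective _ hsurj]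
  haveI : B.FiniteIndex := by
    constructor
    rw [hBidx]
    exact Subgroup.index_ne_zero_of_finite
  -- every generator of the commutator subgroup is central and `H.index * e`-torsion
  have hgenK : ∀ u ∈ verbalOn {w} B, ∀ ℓ ∈ π.ker,
      (∀ t : Gs, ⁅u, ℓ⁆ * t = t * ⁅u, ℓ⁆) ∧ ⁅u, ℓ⁆ ^ (H.index * e) = 1 := by
    intro u hu
    induction hu using Subgroup.closure_induction with
    | mem g hg =>
        obtain ⟨v, hv, fb, hfB, rfl⟩ := hg
        have hvw : w = v := (show v = w from hv).symm
        subst hvw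
        intro ℓ hℓ
        refine ⟨pairing_central hw π hmarg fb hℓ, ?_⟩
        have hpow := comm_pow_index_mem_verbalOn hw π hmarg hstem B hLB fb hfB hℓ
        have hmemL : ⁅FreeGroup.lift fb w, ℓ⁆ ^ B.index ∈ π.ker := by
          have hc : ⁅FreeGroup.lift fb w, ℓ⁆ ∈ π.ker := by
            rw [MonoidHom.mem_ker, map_commutatorElement]
            have hl1 : π ℓ = 1 := hℓ
            rw [hl1, commutatorElement_one_right]
          exact pow_mem hc _
        have hres := pow_exponent_vB0_eq_one hw π hmarg hlifts H B hBH hpow hmemL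
        rw [← hBidx, pow_mul]
        exact hres
    | one =>
        intro ℓ hℓ
        rw [commutatorElement_one_left]
        exact ⟨fun t => by group, one_pow _⟩
    | mul x y hx hy px py =>
        intro ℓ hℓ
        have hxc := (px ℓ hℓ).1
        have hyc := (py ℓ hℓ).1
        have hid : ⁅x * y, ℓ⁆ = x * ⁅y, ℓ⁆ * x⁻¹ * ⁅x, ℓ⁆ := by
          simp only [commutatorElement_def]
          group
        have hmove : x * ⁅y, ℓ⁆ * x⁻¹ = ⁅y, ℓ⁆ := by
          rw [← hyc x]
          group
        have hco : ⁅x * y, ℓ⁆ = ⁅y, ℓ⁆ * ⁅x, ℓ⁆ := by rw [hid, hmove]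
        constructor
        · intro t
          rw [hco, mul_assoc, hxc t, ← mul_assoc, hyc t, mul_assoc]
        · have hcm : Commute ⁅y, ℓ⁆ ⁅x, ℓ⁆ := hyc ⁅x, ℓ⁆
          rw [hco, hcm.mul_pow, (py ℓ hℓ).2, (px ℓ hℓ).2, one_mul]
    | inv x hx px =>
        intro ℓ hℓ
        have hxc := (px ℓ hℓ).1
        have hinv : ∀ t : Gs, ⁅x, ℓ⁆⁻¹ * t = t * ⁅x, ℓ⁆⁻¹ := fun t => by
          have hcm : Commute ⁅x, ℓ⁆ t := hxc t
          exact hcm.inv_left.eq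
        have hid : ⁅x⁻¹, ℓ⁆ = x⁻¹ * ⁅x, ℓ⁆⁻¹ * x := by
          simp only [commutatorElement_def]
          group
        have hmove : x⁻¹ * ⁅x, ℓ⁆⁻¹ * x = ⁅x, ℓ⁆⁻¹ := by
          rw [← hinv x⁻¹]
          group
        have hco : ⁅x⁻¹, ℓ⁆ = ⁅x, ℓ⁆⁻¹ := by rw [hid, hmove]
        constructor
        · intro t
          rw [hco]
          exact hinv t
        · rw [hco, inv_pow, (px ℓ hℓ).2, inv_one]
  -- the subgroup of central `H.index * e`-torsion elements
  set K : Subgroup Gs :=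
    { carrier := {x | (∀ t : Gs, x * t = t * x) ∧ x ^ (H.index * e) = 1}
      one_mem' := ⟨fun t => by group, one_pow _⟩
      mul_mem' := by
        intro x y hx hy
        refine ⟨fun t => by rw [mul_assoc, hy.1 t, ← mul_assoc, hx.1 t, mul_assoc], ?_⟩
        have hcm : Commute x y := hx.1 y
        rw [hcm.mul_pow, hx.2, hy.2, one_mul]
      inv_mem' := by
        intro x hx
        refine ⟨fun t => by
          have hcm : Commute x t := hx.1 t
          exact hcm.inv_left.eq, ?_⟩
        rw [inv_pow, hx.2, inv_one] } with hK
  have hle : (⁅verbalOn {w} B, π.ker⁆ : Subgroup Gs) ≤ K := by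
    rw [Subgroup.commutator_le]
    intro g1 hg1 g2 hg2
    exact (hgenK g1 hg1 g2 hg2)
  apply Monoid.exponent_dvd_of_forall_pow_eq_one
  intro m
  have hmm := (hle m.2).2
  apply Subtype.ext
  rw [SubgroupClass.coe_pow]
  simpa using hmm
end

section
/- Let 𝒱 be a variety of groups defined by a set of words V and let 1 → N →^χ G →^π Q → 1 be a marginal extension, i.e., χ(N) ⊆ V*(G). Then this sequence is a VP extension if and only if χ(N) ∩ T(G) = {1}. -/
/-! Common framework: varieties of groups, verbal and marginal subgroups,
word values, the `B̃₀`-invariant of a group with respect to a variety. -/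

universe u v

open scoped commutatorElement

lemma lift_eq_of_agree {G : Type*} [Group G] (f g : ℕ → G) (v : FreeGroup ℕ)
    (h : ∀ p ∈ v.toWord, f p.1 = g p.1) :
    FreeGroup.lift f v = FreeGroup.lift g v := by
  conv_lhs => rw [← FreeGroup.mk_toWord (x := v)]
  conv_rhs => rw [← FreeGroup.mk_toWord (x := v)]
  rw [FreeGroup.lift_mk, FreeGroup.lift_mk]
  congr 1
  exact List.map_congr_left fun p hp => by rw [h p hp]

lemma lift_eq_of_marginal {V : Set (FreeGroup ℕ)} {G : Type*} [Group G]
    {v : FreeGroup ℕ} (hv : v ∈ V) (f a : ℕ → G) (ha : ∀ n, a n ∈ marginal V G) :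
    FreeGroup.lift (fun n => f n * a n) v = FreeGroup.lift f v := by
  set h : ℕ → ℕ → G := fun k n => if n < k then f n * a n else f n with hh
  have key : ∀ k, FreeGroup.lift (h k) v = FreeGroup.lift f v := by
    intro k
    induction k with
    | zero => simp [hh]
    | succ k ih =>
      have hupd : h (k + 1) = Function.update (h k) k (h k k * a k) := by
        funext n
        by_cases hn : n = k
        · subst hn; simp [hh, Function.update_self]
        · simp only [hh, Function.update_of_ne hn]
          by_cases hlt : n < k
          · simp [hlt, Nat.lt_succ_of_lt hlt]
          · have h2 : ¬ n < k + 1 := by omega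
            simp [hlt, h2]
      rw [hupd, ha k v hv (h k) k, ih]
  set K := (v.toWord.map Prod.fst).foldr max 0 + 1 with hK
  have hlt : ∀ p ∈ v.toWord, p.1 < K := by
    intro p hp
    have : p.1 ≤ (v.toWord.map Prod.fst).foldr max 0 := by
      have hm : p.1 ∈ v.toWord.map Prod.fst := List.mem_map_of_mem hp
      clear hp
      generalize v.toWord.map Prod.fst = l at hm ⊢
      induction l with
      | nil => simp at hm
      | cons x l ihl =>
        rcases List.mem_cons.mp hm with h1 | h1
        · subst h1; exact le_max_left _ _
        · exact le_trans (ihl h1) (le_max_right _ _)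
    omega
  calc FreeGroup.lift (fun n => f n * a n) v
      = FreeGroup.lift (h K) v := lift_eq_of_agree _ _ v (fun p hp => by
        simp [hh, hlt p hp])
    _ = FreeGroup.lift f v := key K

/-- Proposition 4.5 of [1]. Let `1 → N →^χ G →^π Q → 1` be a marginal
extension (an extension with `χ(N) ⊆ V*(G)`). It is a VP extension if and only if
`χ(N) ∩ T(G) = 1`. -/
theorem stmt11 (V : Set (FreeGroup ℕ)) {N G Q : Type*} [Group N] [Group G] [Group Q]
    (χ : N →* G) (π : G →* Q)
    (hinj : Function.Injective χ) (hsurj : Function.Surjective π)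
    (hexact : χ.range = π.ker)
    (hmarg : χ.range ≤ marginal V G) :
    HasVPLifts V π ↔ (∀ x ∈ χ.range, x ∈ wordValues V G → x = 1) := by
  constructor
  · intro hlift x hx hT
    obtain ⟨v, hv, f, hf⟩ := hT
    have hq : FreeGroup.lift (fun n => π (f n)) v = 1 := by
      have : (FreeGroup.lift (fun n => π (f n)) : FreeGroup ℕ →* Q)
          = π.comp (FreeGroup.lift f) := by
        apply FreeGroup.ext_hom; intro n; simp
      rw [this]
      simp only [MonoidHom.comp_apply, hf]
      exact MonoidHom.mem_ker.mp (hexact ▸ hx)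
    obtain ⟨g, hg, hg1⟩ := hlift v hv (fun n => π (f n)) hq
    have hfg : ∀ n, (g n)⁻¹ * f n ∈ χ.range := by
      intro n
      rw [hexact, MonoidHom.mem_ker, map_mul, map_inv, hg n, inv_mul_cancel]
    have : FreeGroup.lift f v = FreeGroup.lift g v := by
      have : f = fun n => g n * ((g n)⁻¹ * f n) := by funext n; group
      rw [this]
      exact lift_eq_of_marginal hv g _ (fun n => hmarg (hfg n))
    rw [← hf, this, hg1]
  · intro htriv v hv q hq
    choose g hg using fun i => hsurj (q i)
    refine ⟨g, hg, ?_⟩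
    apply htriv
    · rw [hexact, MonoidHom.mem_ker]
      have : (FreeGroup.lift q : FreeGroup ℕ →* Q) = π.comp (FreeGroup.lift g) := by
        apply FreeGroup.ext_hom; intro n; simp [hg]
      rw [← hq, this]; rfl
    · exact ⟨v, hv, g, rfl⟩
end

section
/- Let G be a finite group and H a subgroup of G of index n. Then B̃₀(G)ⁿ, the subgroup of the Bogomolov multiplier B̃₀(G) generated by n-th powers of its elements, is isomorphic to a subgroup of B̃₀(H). -/
/-! Common framework: varieties of groups, verbal and marginal subgroups,
word values, the `B̃₀`-invariant of a group with respect to a variety. -/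

universe u v

open scoped commutatorElement

/-! ### Auxiliary lemmas for `stmt14` -/

instance vB0Den_normal' (V : Set (FreeGroup ℕ)) (X : Type*) [Group X] :
    (vB0Den V X).Normal := vB0Den_normal V X

lemma commutator_mem_wordValues {X : Type*} [Group X] (a b : X) :
    ⁅a, b⁆ ∈ wordValues commutatorWord X := by
  refine ⟨⁅FreeGroup.of 0, FreeGroup.of 1⁆, rfl, fun i => if i = 0 then a else b, ?_⟩
  simp [map_commutatorElement]

lemma wordValues_commutatorWord_eq (X : Type*) [Group X] :
    wordValues commutatorWord X = commutatorSet X := by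
  ext g
  constructor
  · rintro ⟨v, hv, f, rfl⟩
    rw [commutatorWord, Set.mem_singleton_iff] at hv
    subst hv
    exact ⟨f 0, f 1, by simp [map_commutatorElement]⟩
  · rintro ⟨a, b, rfl⟩
    exact commutator_mem_wordValues a b

lemma verbal_commutatorWord_eq (X : Type*) [Group X] :
    verbal commutatorWord X = commutator X := by
  rw [verbal, wordValues_commutatorWord_eq, commutator_eq_closure]

lemma presHom_surjective (X : Type*) [Group X] : Function.Surjective (presHom X) :=
  fun g => ⟨FreeGroup.of g, by simp [presHom]⟩

/-- The canonical embedding of `vB0 V X` into `FreeGroup X ⧸ vB0Den V X`. -/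
def vB0toQuot (V : Set (FreeGroup ℕ)) (X : Type*) [Group X] :
    vB0 V X →* FreeGroup X ⧸ vB0Den V X :=
  QuotientGroup.lift _ ((QuotientGroup.mk' (vB0Den V X)).comp (vB0Num V X).subtype)
    fun x hx => (QuotientGroup.eq_one_iff _).mpr (Subgroup.mem_subgroupOf.mp hx)

lemma vB0toQuot_mk (V : Set (FreeGroup ℕ)) (X : Type*) [Group X] (w : ↥(vB0Num V X)) :
    vB0toQuot V X (QuotientGroup.mk w) = QuotientGroup.mk (w : FreeGroup X) := rfl

lemma vB0_mk_surjective (V : Set (FreeGroup ℕ)) (X : Type*) [Group X] (x : vB0 V X) :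
    ∃ w : ↥(vB0Num V X), QuotientGroup.mk w = x :=
  QuotientGroup.mk_surjective x

lemma vB0toQuot_injective (V : Set (FreeGroup ℕ)) (X : Type*) [Group X] :
    Function.Injective (vB0toQuot V X) := by
  rw [injective_iff_map_eq_one]
  intro a ha
  obtain ⟨w, rfl⟩ := vB0_mk_surjective V X a
  rw [vB0toQuot_mk] at ha
  exact (QuotientGroup.eq_one_iff w).mpr
    (Subgroup.mem_subgroupOf.mpr ((QuotientGroup.eq_one_iff _).mp ha))

lemma presKer_map_le_center (X : Type*) [Group X] :
    (presKer X).map (QuotientGroup.mk' (vB0Den commutatorWord X)) ≤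
      Subgroup.center (FreeGroup X ⧸ vB0Den commutatorWord X) := by
  rintro x ⟨r, hr, rfl⟩
  rw [Subgroup.mem_center_iff]
  intro q
  induction q using QuotientGroup.induction_on with
  | _ f =>
    have h1 : ⁅f, r⁆ ∈ vB0Den commutatorWord X := by
      refine Subgroup.subset_closure ⟨commutator_mem_wordValues f r, ?_⟩
      have : presHom X ⁅f, r⁆ = 1 := by
        rw [map_commutatorElement, MonoidHom.mem_ker.mp hr, commutatorElement_one_right]
      exact this
    have h2 : (QuotientGroup.mk' (vB0Den commutatorWord X)) ⁅f, r⁆ = 1 :=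
      (QuotientGroup.eq_one_iff _).mpr h1
    rw [map_commutatorElement] at h2
    exact commutatorElement_eq_one_iff_mul_comm.mp h2

lemma commutatorElement_mul_center {Q : Type*} [Group Q] {r r' : Q}
    (hr : r ∈ Subgroup.center Q) (hr' : r' ∈ Subgroup.center Q) (t t' : Q) :
    ⁅t * r, t' * r'⁆ = ⁅t, t'⁆ := by
  have key : ∀ a z : Q, z ∈ Subgroup.center Q → ∀ b : Q, ⁅a * z, b⁆ = ⁅a, b⁆ := by
    intro a z hz b
    have hz' := Subgroup.mem_center_iff.mp hz
    rw [commutatorElement_def, commutatorElement_def, mul_inv_rev,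
      mul_assoc a z b, ← hz' b, ← mul_assoc a b z]
    group
  rw [key t r hr (t' * r'), ← commutatorElement_inv, key t' r' hr' t, commutatorElement_inv]

lemma vB0toQuot_mem_inf {X : Type*} [Group X] (x : vB0 commutatorWord X) :
    vB0toQuot commutatorWord X x ∈
      (presKer X).map (QuotientGroup.mk' (vB0Den commutatorWord X)) ⊓
        commutator (FreeGroup X ⧸ vB0Den commutatorWord X) := by
  obtain ⟨w, rfl⟩ := vB0_mk_surjective _ _ x
  rw [vB0toQuot_mk]
  refine Subgroup.mem_inf.mpr ⟨⟨w, (Subgroup.mem_inf.mp w.2).1, rfl⟩, ?_⟩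
  have hwv : (w : FreeGroup X) ∈ commutator (FreeGroup X) := by
    rw [← verbal_commutatorWord_eq]; exact (Subgroup.mem_inf.mp w.2).2
  have h1 : (QuotientGroup.mk' (vB0Den commutatorWord X)) (w : FreeGroup X) ∈
      (commutator (FreeGroup X)).map (QuotientGroup.mk' (vB0Den commutatorWord X)) :=
    ⟨w, hwv, rfl⟩
  have h2 : (commutator (FreeGroup X)).map (QuotientGroup.mk' (vB0Den commutatorWord X)) ≤
      commutator (FreeGroup X ⧸ vB0Den commutatorWord X) := by
    rw [commutator_def, commutator_def, Subgroup.map_commutator]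
    exact Subgroup.commutator_mono le_top le_top
  exact h2 h1

lemma vB0_mul_comm (X : Type*) [Group X] (a b : vB0 commutatorWord X) :
    a * b = b * a := by
  apply vB0toQuot_injective commutatorWord X
  rw [map_mul, map_mul]
  exact Subgroup.mem_center_iff.mp
    (presKer_map_le_center X (Subgroup.mem_inf.mp (vB0toQuot_mem_inf b)).1) _

lemma finite_commutatorSet_quot (X : Type*) [Group X] [Finite X] :
    Finite (commutatorSet (FreeGroup X ⧸ vB0Den commutatorWord X)) := by
  have hsub : commutatorSet (FreeGroup X ⧸ vB0Den commutatorWord X) ⊆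
      Set.range (fun p : X × X =>
        ⁅(QuotientGroup.mk' (vB0Den commutatorWord X)) (FreeGroup.of p.1),
          (QuotientGroup.mk' (vB0Den commutatorWord X)) (FreeGroup.of p.2)⁆) := by
    rintro c ⟨a, b, rfl⟩
    obtain ⟨x, rfl⟩ := QuotientGroup.mk'_surjective _ a
    obtain ⟨y, rfl⟩ := QuotientGroup.mk'_surjective _ b
    refine ⟨(presHom X x, presHom X y), ?_⟩
    have hx : (QuotientGroup.mk' (vB0Den commutatorWord X)) x =
        (QuotientGroup.mk' (vB0Den commutatorWord X)) (FreeGroup.of (presHom X x)) *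
          (QuotientGroup.mk' (vB0Den commutatorWord X))
            ((FreeGroup.of (presHom X x))⁻¹ * x) := by
      rw [← map_mul, mul_inv_cancel_left]
    have hy : (QuotientGroup.mk' (vB0Den commutatorWord X)) y =
        (QuotientGroup.mk' (vB0Den commutatorWord X)) (FreeGroup.of (presHom X y)) *
          (QuotientGroup.mk' (vB0Den commutatorWord X))
            ((FreeGroup.of (presHom X y))⁻¹ * y) := by
      rw [← map_mul, mul_inv_cancel_left]
    have hrx : (QuotientGroup.mk' (vB0Den commutatorWord X))
        ((FreeGroup.of (presHom X x))⁻¹ * x) ∈ Subgroup.center _ := by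
      refine presKer_map_le_center X ⟨_, ?_, rfl⟩
      have : presHom X ((FreeGroup.of (presHom X x))⁻¹ * x) = 1 := by
        rw [map_mul, map_inv]
        simp [presHom]
      exact this
    have hry : (QuotientGroup.mk' (vB0Den commutatorWord X))
        ((FreeGroup.of (presHom X y))⁻¹ * y) ∈ Subgroup.center _ := by
      refine presKer_map_le_center X ⟨_, ?_, rfl⟩
      have : presHom X ((FreeGroup.of (presHom X y))⁻¹ * y) = 1 := by
        rw [map_mul, map_inv]
        simp [presHom]
      exact this
    dsimp only
    rw [hx, hy, commutatorElement_mul_center hrx hry]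
  exact Set.Finite.to_subtype ((Set.finite_range _).subset hsub)

lemma vB0_finite (X : Type*) [Group X] [Finite X] :
    Finite (vB0 commutatorWord X) := by
  haveI := finite_commutatorSet_quot X
  haveI : Finite (_root_.commutator (FreeGroup X ⧸ vB0Den commutatorWord X)) := inferInstance
  refine Finite.of_injective (fun x : vB0 commutatorWord X =>
    (⟨vB0toQuot commutatorWord X x, (Subgroup.mem_inf.mp (vB0toQuot_mem_inf x)).2⟩ :
      _root_.commutator (FreeGroup X ⧸ vB0Den commutatorWord X))) ?_
  intro a b hab
  exact vB0toQuot_injective _ _ (Subtype.ext_iff.mp hab)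

lemma exists_injective_quotient {A : Type*} [CommGroup A] [Finite A] (N : Subgroup A)
    [N.Normal] : ∃ ψ : (A ⧸ N) →* A, Function.Injective ψ := by
  haveI : Finite (A ⧸ N) := Quotient.finite _
  haveI h1 : NeZero ((Monoid.exponent (A ⧸ N) : ℂ)) :=
    ⟨Nat.cast_ne_zero.mpr Monoid.exponent_ne_zero_of_finite⟩
  haveI h2 : NeZero ((Monoid.exponent A : ℂ)) :=
    ⟨Nat.cast_ne_zero.mpr Monoid.exponent_ne_zero_of_finite⟩
  obtain ⟨e1⟩ := CommGroup.monoidHom_mulEquiv_of_hasEnoughRootsOfUnity (A ⧸ N) ℂ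
  obtain ⟨e2⟩ := CommGroup.monoidHom_mulEquiv_of_hasEnoughRootsOfUnity A ℂ
  let c : ((A ⧸ N) →* ℂˣ) →* (A →* ℂˣ) :=
    { toFun := fun φ => φ.comp (QuotientGroup.mk' N)
      map_one' := by ext; simp
      map_mul' := fun φ φ' => by ext; simp }
  have hc : Function.Injective c := by
    intro φ φ' h
    ext q
    exact congrArg Units.val (DFunLike.congr_fun h q)
  refine ⟨(e2.toMonoidHom.comp c).comp e1.symm.toMonoidHom, ?_⟩
  intro a b hab
  exact e1.symm.injective (hc (e2.injective hab))

lemma presHom_comp_lift {X : Type*} [Group X] (H : Subgroup X) :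
    (presHom X).comp (FreeGroup.lift fun h : ↥H => FreeGroup.of (h : X)) =
      H.subtype.comp (presHom ↥H) := by
  apply FreeGroup.ext_hom
  intro a
  simp [presHom, FreeGroup.lift_apply_of]

lemma presHom_of_inv_mul (X : Type*) [Group X] (s : FreeGroup X) :
    presHom X ((FreeGroup.of (presHom X s))⁻¹ * s) = 1 := by
  rw [map_mul, map_inv]
  simp [presHom, FreeGroup.lift_apply_of]

/-- Jezernik–Moravec. Let `G` be a finite group and `H ≤ G` of index `n`.
Then `B̃₀(G)ⁿ`, the subgroup of the Bogomolov multiplier generated by `n`-th powers, is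
isomorphic to a subgroup of `B̃₀(H)`. -/
theorem stmt14 {G : Type u} [Group G] [Finite G] (H : Subgroup G) {n : ℕ}
    (hn : H.index = n) :
    ∃ φ : ↥(Subgroup.closure (Set.range (fun x : B0tilde G => x ^ n))) →* B0tilde ↥H,
      Function.Injective φ := by
  classical
  let F := FreeGroup G
  let π : F →* G := presHom G
  let R : Subgroup F := presKer G
  let D : Subgroup F := vB0Den commutatorWord G
  let mkQ : F →* F ⧸ D := QuotientGroup.mk' D
  have hπ : Function.Surjective π := presHom_surjective G
  have hDR : D ≤ R := (Subgroup.closure_le _).mpr fun x hx => hx.2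
  let S : Subgroup F := H.comap π
  have hRS : R ≤ S := by
    intro x hx
    have h1 : π x = 1 := hx
    show π x ∈ H
    rw [h1]
    exact H.one_mem
  have hDS : D ≤ S := hDR.trans hRS
  have hcen : R.map mkQ ≤ Subgroup.center (F ⧸ D) := presKer_map_le_center G
  let Sb : Subgroup (F ⧸ D) := S.map mkQ
  have hSbidx : Sb.index = n := by
    have h1 : (S.map mkQ).index = S.index :=
      S.index_map_eq (QuotientGroup.mk'_surjective D)
        (by rw [QuotientGroup.ker_mk']; exact hDS)
    have h2 : S.index = H.index := H.index_comap_of_surjective hπ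
    exact h1.trans (h2.trans hn)
  have hn0 : n ≠ 0 := by
    rw [← hn]; exact Subgroup.index_ne_zero_of_finite
  haveI : Sb.FiniteIndex := ⟨by rw [hSbidx]; exact hn0⟩
  -- the transfer argument: `n`-th powers of central commutator-classes of relators land in
  -- the derived subgroup of `Sb`
  have key : ∀ x : F ⧸ D, x ∈ R.map mkQ → x ∈ _root_.commutator (F ⧸ D) →
      x ^ n ∈ ⁅Sb, Sb⁆ := by
    intro x hxR hxC
    have hcenx : ∀ k : ℕ, x ^ k ∈ Subgroup.center (F ⧸ D) := fun k =>
      Subgroup.pow_mem _ (hcen hxR) k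
    let ϕ : ↥Sb →* Abelianization ↥Sb := Abelianization.of
    have hkey : ∀ (k : ℕ) (g₀ : F ⧸ D), g₀⁻¹ * x ^ k * g₀ ∈ Sb → g₀⁻¹ * x ^ k * g₀ = x ^ k := by
      intro k g₀ _
      have hc := Subgroup.mem_center_iff.mp (hcenx k) g₀
      rw [mul_assoc, ← hc, ← mul_assoc, inv_mul_cancel, one_mul]
    have ht := MonoidHom.transfer_eq_pow ϕ x hkey
    have h1 : MonoidHom.transfer ϕ x = 1 :=
      MonoidHom.mem_ker.mp (Abelianization.commutator_subset_ker (MonoidHom.transfer ϕ) hxC)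
    rw [ht] at h1
    have h2 : x ^ Sb.index ∈ (_root_.commutator ↥Sb).map Sb.subtype :=
      Subgroup.mem_map.mpr ⟨_, (QuotientGroup.eq_one_iff _).mp h1, rfl⟩
    have h3 : (_root_.commutator ↥Sb).map Sb.subtype = ⁅Sb, Sb⁆ := by
      rw [commutator_def, Subgroup.map_commutator, ← MonoidHom.range_eq_map,
        Subgroup.range_subtype]
    rw [h3, hSbidx] at h2
    exact h2
  -- the comparison homomorphism from the canonical presentation of `H`
  let τ : FreeGroup ↥H →* F := FreeGroup.lift fun h : ↥H => FreeGroup.of (h : G)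
  have hπτ : π.comp τ = H.subtype.comp (presHom ↥H) := presHom_comp_lift H
  have hπτ' : ∀ w, π (τ w) = ((presHom ↥H w : ↥H) : G) := fun w => by
    have := DFunLike.congr_fun hπτ w
    simpa using this
  have hτR : ∀ w ∈ presKer ↥H, τ w ∈ R := by
    intro w hw
    have h1 : presHom ↥H w = 1 := hw
    show π (τ w) = 1
    rw [hπτ', h1, OneMemClass.coe_one]
  have hτD : ∀ w ∈ vB0Den commutatorWord ↥H, τ w ∈ D := by
    intro w hw
    replace hw : w ∈ Subgroup.closure (wordValues commutatorWord (FreeGroup ↥H) ∩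
        (presKer ↥H : Set (FreeGroup ↥H))) := hw
    induction hw using Subgroup.closure_induction with
    | mem t ht =>
      obtain ⟨ht1, ht2⟩ := ht
      rw [wordValues_commutatorWord_eq] at ht1
      obtain ⟨a, b, rfl⟩ := ht1
      refine Subgroup.subset_closure ⟨?_, hτR _ ht2⟩
      rw [map_commutatorElement]
      exact commutator_mem_wordValues _ _
    | one => rw [map_one]; exact D.one_mem
    | mul a b _ _ pa pb => rw [map_mul]; exact D.mul_mem pa pb
    | inv a _ pa => rw [map_inv]; exact D.inv_mem pa
  let g0 : ↥(vB0Num commutatorWord ↥H) →* F ⧸ D :=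
    mkQ.comp (τ.comp (vB0Num commutatorWord ↥H).subtype)
  have hg0 : ∀ x ∈ (vB0Den commutatorWord ↥H).subgroupOf (vB0Num commutatorWord ↥H),
      g0 x = 1 := fun x hx =>
    (QuotientGroup.eq_one_iff _).mpr (hτD _ (Subgroup.mem_subgroupOf.mp hx))
  let Φ0 : B0tilde ↥H →* F ⧸ D := QuotientGroup.lift _ g0 hg0
  let W : Subgroup (F ⧸ D) := R.map mkQ ⊓ ⁅Sb, Sb⁆
  have hWle : W ≤ Φ0.range := by
    let T : Subgroup (F ⧸ D) := (mkQ.comp τ).range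
    have hST : Sb ≤ T ⊔ R.map mkQ := by
      rintro x ⟨s, hs, rfl⟩
      have hs' : π s ∈ H := hs
      have h1 : mkQ (FreeGroup.of ((⟨π s, hs'⟩ : ↥H) : G)) ∈ T :=
        MonoidHom.mem_range.mpr ⟨FreeGroup.of (⟨π s, hs'⟩ : ↥H), by simp [τ]⟩
      have h2 : (FreeGroup.of ((⟨π s, hs'⟩ : ↥H) : G))⁻¹ * s ∈ R :=
        presHom_of_inv_mul G s
      have hdec : mkQ s = mkQ (FreeGroup.of ((⟨π s, hs'⟩ : ↥H) : G)) *
          mkQ ((FreeGroup.of ((⟨π s, hs'⟩ : ↥H) : G))⁻¹ * s) := by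
        rw [← map_mul, mul_inv_cancel_left]
      rw [hdec]
      exact Subgroup.mul_mem _ (Subgroup.mem_sup_left h1)
        (Subgroup.mem_sup_right (Subgroup.mem_map.mpr ⟨_, h2, rfl⟩))
    haveI hRN : (R.map mkQ).Normal :=
      (MonoidHom.normal_ker π).map mkQ (QuotientGroup.mk'_surjective D)
    have hcomm2 : ⁅T ⊔ R.map mkQ, T ⊔ R.map mkQ⁆ ≤ ⁅T, T⁆ := by
      rw [Subgroup.commutator_le]
      intro g1 hg1 g2 hg2
      rw [← SetLike.mem_coe, Subgroup.mul_normal] at hg1 hg2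
      obtain ⟨t1, ht1, r1, hr1, rfl⟩ := hg1
      obtain ⟨t2, ht2, r2, hr2, rfl⟩ := hg2
      rw [commutatorElement_mul_center (hcen hr1) (hcen hr2)]
      exact Subgroup.commutator_mem_commutator ht1 ht2
    intro x hx
    obtain ⟨hxR, hxT'⟩ := Subgroup.mem_inf.mp hx
    have hxT : x ∈ ⁅T, T⁆ := hcomm2 (Subgroup.commutator_mono hST hST hxT')
    have hTmap : ⁅T, T⁆ = (_root_.commutator (FreeGroup ↥H)).map (mkQ.comp τ) := by
      rw [commutator_def, Subgroup.map_commutator, ← MonoidHom.range_eq_map]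
    rw [hTmap] at hxT
    obtain ⟨u, hu, rfl⟩ := Subgroup.mem_map.mp hxT
    have hτuR : τ u ∈ R := by
      obtain ⟨r, hr, hre⟩ := Subgroup.mem_map.mp hxR
      obtain ⟨d, hd, hrd⟩ := (QuotientGroup.mk'_eq_mk' D).mp hre
      rw [← hrd]
      exact R.mul_mem hr (hDR hd)
    have huK : u ∈ presKer ↥H := by
      have h5 : ((presHom ↥H u : ↥H) : G) = 1 := by
        rw [← hπτ' u]; exact hτuR
      exact (OneMemClass.coe_eq_one.mp h5 : presHom ↥H u = 1)
    have huNum : u ∈ vB0Num commutatorWord ↥H := by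
      refine Subgroup.mem_inf.mpr ⟨huK, ?_⟩
      rw [verbal_commutatorWord_eq]
      exact hu
    exact MonoidHom.mem_range.mpr
      ⟨QuotientGroup.mk (⟨u, huNum⟩ : ↥(vB0Num commutatorWord ↥H)), rfl⟩
  -- the subgroup of `n`-th powers embeds into `W`
  let jG : B0tilde G →* F ⧸ D := vB0toQuot commutatorWord G
  have hjInj : Function.Injective jG := vB0toQuot_injective _ _
  have hjP : ∀ p ∈ Subgroup.closure (Set.range fun x : B0tilde G => x ^ n), jG p ∈ W := by
    intro p hp
    induction hp using Subgroup.closure_induction with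
    | mem g hg =>
      obtain ⟨x, rfl⟩ := hg
      rw [map_pow]
      have h := Subgroup.mem_inf.mp (vB0toQuot_mem_inf x)
      exact Subgroup.mem_inf.mpr ⟨Subgroup.pow_mem _ h.1 n, key (jG x) h.1 h.2⟩
    | one => rw [map_one]; exact W.one_mem
    | mul a b _ _ pa pb => rw [map_mul]; exact W.mul_mem pa pb
    | inv a _ pa => rw [map_inv]; exact W.inv_mem pa
  let P := Subgroup.closure (Set.range fun x : B0tilde G => x ^ n)
  let φ2 : ↥P →* ↥W := (jG.comp P.subtype).codRestrict W fun p => hjP p.1 p.2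
  have hφ2 : Function.Injective φ2 := by
    intro a b hab
    exact Subtype.ext (hjInj (Subtype.ext_iff.mp hab))
  -- `B̃₀(H)` is a finite abelian group
  haveI hFin : Finite (B0tilde ↥H) := vB0_finite ↥H
  letI : CommGroup (B0tilde ↥H) :=
    { (inferInstance : Group (B0tilde ↥H)) with mul_comm := vB0_mul_comm ↥H }
  let Y : Subgroup (B0tilde ↥H) := W.comap Φ0
  let Φ0' : ↥Y →* ↥W := (Φ0.comp Y.subtype).codRestrict W fun y => y.2
  have hsurj : Function.Surjective Φ0' := by
    intro w
    obtain ⟨b, hb⟩ := hWle w.2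
    refine ⟨⟨b, ?_⟩, Subtype.ext hb⟩
    show Φ0 b ∈ W
    rw [hb]
    exact w.2
  obtain ⟨ψ, hψ⟩ := exists_injective_quotient Φ0'.ker
  let e := QuotientGroup.quotientKerEquivOfSurjective Φ0' hsurj
  refine ⟨(Y.subtype.comp (ψ.comp e.symm.toMonoidHom)).comp φ2, ?_⟩
  intro a b hab
  exact hφ2 (e.symm.injective (hψ (Y.subtype_injective hab)))
end
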